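/- arXiv:2506.13911 — 2 statements merged into one kernel-verified Lean document; each statement's English description precedes it below -/
import Mathlib

section
/- For every d ≥ 0, the separating power of HE-GNN node classifiers of nesting depth d equals that of GML(↓) sentences of ↓-nesting-depth at most d: ρ(HE-GNN-(d)) = ρ(GML(↓^d)). Consequently (taking the union over all d), ρ(HE-GNN) = ρ(GML(↓)). That is, two pointed graphs (G,v) and (G',v') satisfy cls(G,v)=cls(G',v') for all nesting-depth-d HE-GNN classifiers cls if and only if they satisfy exactly the same GML(↓^d) sentences. -/
open Classical

/-! ### Graphs with `p` binary node features -/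

/-- A finite undirected graph with node labels over `p` binary features. -/
structure LabGraph (p : ℕ) : Type 1 where
  V : Type
  fintypeV : Fintype V
  decEqV : DecidableEq V
  adj : V → V → Prop
  symm : ∀ {u v}, adj u v → adj v u
  irrefl : ∀ v, ¬ adj v v
  lab : V → Fin p → Prop

attribute [instance] LabGraph.fintypeV LabGraph.decEqV

namespace LabGraph

variable {p : ℕ}

/-- The finset of neighbours of a node. -/
noncomputable def nbrFinset (G : LabGraph p) (v : G.V) : Finset G.V :=
  Finset.univ.filter (fun u => G.adj v u)

/-- Multi-hot label encoding. -/
noncomputable def embG (G : LabGraph p) (v : G.V) : Fin p → ℝ :=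
  fun i => if G.lab v i then 1 else 0

/-- `G.within v r u` : node `u` is at distance at most `r` from `v`. -/
def within (G : LabGraph p) (v : G.V) : ℕ → G.V → Prop
  | 0 => fun u => u = v
  | (r+1) => fun u => G.within v r u ∨ ∃ w, G.within v r w ∧ G.adj w u

theorem within_self (G : LabGraph p) (v : G.V) : ∀ r, G.within v r v
  | 0 => rfl
  | (r+1) => Or.inl (G.within_self v r)

/-- Induced subgraph on a set of nodes. -/
noncomputable def induce (G : LabGraph p) (S : Set G.V) : LabGraph p where
  V := {u // u ∈ S}
  fintypeV := Fintype.ofFinite _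
  decEqV := inferInstance
  adj a b := G.adj a.1 b.1
  symm h := G.symm h
  irrefl a h := G.irrefl a.1 h
  lab a := G.lab a.1

/-- `G_v^r` : the induced subgraph on the radius-`r` neighbourhood of `v`. -/
noncomputable def ball (G : LabGraph p) (v : G.V) (r : ℕ) : LabGraph p :=
  G.induce {u | G.within v r u}

/-- The centre of `G_v^r`, as a node of `G_v^r`. -/
noncomputable def ballCenter (G : LabGraph p) (v : G.V) (r : ℕ) : (G.ball v r).V :=
  ⟨v, G.within_self v r⟩

end LabGraph

/-! ### GNNs -/

/-- A single message-passing layer: aggregation over the multiset of neighbour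
embeddings and combination of the node embedding (concatenated via `Fin.append`)
with the aggregated value. -/
structure GNNLayer (Din Dout : ℕ) : Type where
  agg : Multiset (Fin Din → ℝ) → (Fin Din → ℝ)
  com : (Fin (Din + Din) → ℝ) → (Fin Dout → ℝ)

/-- A `(D,D')`-GNN: a nonempty sequence of layers with matching dimensions. -/
inductive GNN : ℕ → ℕ → Type
  | last {D D'} (l : GNNLayer D D') : GNN D D'
  | cons {D Dm D'} (l : GNNLayer D Dm) (rest : GNN Dm D') : GNN D D'

noncomputable def GNNLayer.apply {p Din Dout : ℕ} (l : GNNLayer Din Dout) (G : LabGraph p)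
    (emb : G.V → Fin Din → ℝ) : G.V → Fin Dout → ℝ :=
  fun v => l.com (Fin.append (emb v) (l.agg ((G.nbrFinset v).val.map emb)))

/-- Running a GNN on an embedded graph. -/
noncomputable def GNN.run {p : ℕ} : {D D' : ℕ} → GNN D D' → (G : LabGraph p) →
    (G.V → Fin D → ℝ) → (G.V → Fin D' → ℝ)
  | _, _, .last l, G, emb => l.apply G emb
  | _, _, .cons l rest, G, emb => rest.run G (l.apply G emb)

/-- The node classifier of a `(p,1)`-GNN (as a proposition: value `1` ↔ output `> 0`). -/
def GNN.clsP {p : ℕ} (A : GNN p 1) (G : LabGraph p) (v : G.V) : Prop :=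
  0 < A.run G G.embG v 0

/-- The node classifier of a `(p,1)`-GNN, as a boolean value. -/
noncomputable def GNN.cls {p : ℕ} (A : GNN p 1) (G : LabGraph p) (v : G.V) : Bool :=
  if A.clsP G v then true else false

/-! ### Hierarchical Ego GNNs -/

/-- A `(D,D')`-HE-GNN of nesting depth `d`. -/
inductive HEGNN : ℕ → ℕ → ℕ → Type
  | base {D D'} (A : GNN D D') : HEGNN 0 D D'
  | nest {d D D'' D'} (B : HEGNN d (D+1) D'') (C : GNN (D + D'') D') : HEGNN (d+1) D D'

noncomputable def HEGNN.run {p : ℕ} : {d D D' : ℕ} → HEGNN d D D' → (G : LabGraph p) →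
    (G.V → Fin D → ℝ) → (G.V → Fin D' → ℝ)
  | _, _, _, .base A, G, emb => A.run G emb
  | _, _, _, .nest B C, G, emb =>
      C.run G (fun v => Fin.append (emb v)
        (B.run G (fun u => Fin.append (emb u) (fun _ => if u = v then (1:ℝ) else 0)) v))

def HEGNN.clsP {p d : ℕ} (A : HEGNN d p 1) (G : LabGraph p) (v : G.V) : Prop :=
  0 < A.run G G.embG v 0

noncomputable def HEGNN.cls {p d : ℕ} (A : HEGNN d p 1) (G : LabGraph p) (v : G.V) : Bool :=
  if A.clsP G v then true else false

/-! ### Hierarchical Ego Subgraph GNNs -/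

/-- A `(D,D')`-HES-GNN of depth `d`; each nesting step carries its own radius `r`. -/
inductive HESGNN : ℕ → ℕ → ℕ → Type
  | base {D D'} (A : GNN D D') : HESGNN 0 D D'
  | nest {d D D'' D'} (r : ℕ) (B : HESGNN d (D+1) D'') (C : GNN (D + D'') D') :
      HESGNN (d+1) D D'

noncomputable def HESGNN.run {p : ℕ} : {d D D' : ℕ} → HESGNN d D D' → (G : LabGraph p) →
    (G.V → Fin D → ℝ) → (G.V → Fin D' → ℝ)
  | _, _, _, .base A, G, emb => A.run G emb
  | _, _, _, .nest r B C, G, emb =>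
      C.run G (fun v => Fin.append (emb v)
        (B.run (G.ball v r)
          (fun u => Fin.append (emb u.1) (fun _ => if u.1 = v then (1:ℝ) else 0))
          (G.ballCenter v r)))

/-- All subgraph restrictions in the HES-GNN use radius `r`. -/
def HESGNN.radIs : {d D D' : ℕ} → ℕ → HESGNN d D D' → Prop
  | _, _, _, _, .base _ => True
  | _, _, _, r, .nest r' B _ => r' = r ∧ B.radIs r

def HESGNN.clsP {p d : ℕ} (A : HESGNN d p 1) (G : LabGraph p) (v : G.V) : Prop :=
  0 < A.run G G.embG v 0

noncomputable def HESGNN.cls {p d : ℕ} (A : HESGNN d p 1) (G : LabGraph p) (v : G.V) : Bool :=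
  if A.clsP G v then true else false
/-! ### Graded modal logic GML -/

inductive GML (p : ℕ) : Type
  | prop (i : Fin p)
  | top
  | and (φ ψ : GML p)
  | not (φ : GML p)
  | dia (k : ℕ) (φ : GML p)

/-- Satisfaction of a GML formula at a node. -/
def GML.sat {p : ℕ} (G : LabGraph p) : GML p → G.V → Prop
  | .prop i, v => G.lab v i
  | .top, _ => True
  | .and φ ψ, v => φ.sat G v ∧ ψ.sat G v
  | .not φ, v => ¬ φ.sat G v
  | .dia k φ, v => k ≤ Nat.card {u : G.V // G.adj v u ∧ φ.sat G u}

/-! ### Graded hybrid logic GML(↓) -/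

inductive GMLd (p : ℕ) : Type
  | prop (i : Fin p)
  | var (x : ℕ)
  | top
  | and (φ ψ : GMLd p)
  | not (φ : GMLd p)
  | dia (k : ℕ) (φ : GMLd p)
  | bind (x : ℕ) (φ : GMLd p)

/-- Satisfaction of a GML(↓) formula at a node, relative to an assignment of
variables to (marked) nodes; `↓x.φ` marks the current node with `x`. -/
def GMLd.sat {p : ℕ} (G : LabGraph p) : GMLd p → (ℕ → Option G.V) → G.V → Prop
  | .prop i, _, v => G.lab v i
  | .var x, g, v => g x = some v
  | .top, _, _ => True
  | .and φ ψ, g, v => φ.sat G g v ∧ ψ.sat G g v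
  | .not φ, g, v => ¬ φ.sat G g v
  | .dia k φ, g, v => k ≤ Nat.card {u : G.V // G.adj v u ∧ φ.sat G g u}
  | .bind x φ, g, v => φ.sat G (Function.update g x (some v)) v

def GMLd.free {p : ℕ} : GMLd p → Set ℕ
  | .prop _ => ∅
  | .var x => {x}
  | .top => ∅
  | .and φ ψ => φ.free ∪ ψ.free
  | .not φ => φ.free
  | .dia _ φ => φ.free
  | .bind x φ => φ.free \ {x}

/-- A sentence has no free variables. -/
def GMLd.Sentence {p : ℕ} (φ : GMLd p) : Prop := φ.free = ∅

/-- The ↓-nesting-depth of a formula. -/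
def GMLd.bindDepth {p : ℕ} : GMLd p → ℕ
  | .prop _ => 0
  | .var _ => 0
  | .top => 0
  | .and φ ψ => max φ.bindDepth ψ.bindDepth
  | .not φ => φ.bindDepth
  | .dia _ φ => φ.bindDepth
  | .bind _ φ => φ.bindDepth + 1

/-- Satisfaction of a sentence (empty assignment). -/
def GMLd.satS {p : ℕ} (G : LabGraph p) (φ : GMLd p) (v : G.V) : Prop :=
  φ.sat G (fun _ => none) v

/-! ### Graded hybrid subgraph logic: the fragment GML(↓_W) -/

inductive GMLW (p : ℕ) : Type
  | prop (i : Fin p)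
  | var (x : ℕ)
  | top
  | and (φ ψ : GMLW p)
  | not (φ : GMLW p)
  | dia (k : ℕ) (φ : GMLW p)
  /-- `↓_{W^r} x. φ`, i.e. `↓x. W^r φ`. -/
  | bindW (x : ℕ) (r : ℕ) (φ : GMLW p)

/-- Restrict an assignment along passage to an induced subgraph: markings of
nodes outside the subgraph disappear. -/
noncomputable def restrictAssign {p : ℕ} {G : LabGraph p} (S : Set G.V)
    (g : ℕ → Option G.V) : ℕ → Option (G.induce S).V :=
  fun x => (g x).bind (fun w => if h : w ∈ S then some ⟨w, h⟩ else none)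

/-- Satisfaction for the fragment GML(↓_W): `↓x.W^r φ` marks the current node `v`
with `x` and evaluates `φ` in the subgraph `G_v^r`. -/
noncomputable def GMLW.sat {p : ℕ} : GMLW p → (G : LabGraph p) → (ℕ → Option G.V) → G.V → Prop
  | .prop i, G, _, v => G.lab v i
  | .var x, _, g, v => g x = some v
  | .top, _, _, _ => True
  | .and φ ψ, G, g, v => φ.sat G g v ∧ ψ.sat G g v
  | .not φ, G, g, v => ¬ φ.sat G g v
  | .dia k φ, G, g, v => k ≤ Nat.card {u : G.V // G.adj v u ∧ φ.sat G g u}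
  | .bindW x r φ, G, g, v =>
      φ.sat (G.ball v r) (restrictAssign _ (Function.update g x (some v))) (G.ballCenter v r)

def GMLW.free {p : ℕ} : GMLW p → Set ℕ
  | .prop _ => ∅
  | .var x => {x}
  | .top => ∅
  | .and φ ψ => φ.free ∪ ψ.free
  | .not φ => φ.free
  | .dia _ φ => φ.free
  | .bindW x _ φ => φ.free \ {x}

def GMLW.Sentence {p : ℕ} (φ : GMLW p) : Prop := φ.free = ∅

/-- The nesting depth of `↓_{W^r}` operators. -/
def GMLW.bindDepth {p : ℕ} : GMLW p → ℕ
  | .prop _ => 0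
  | .var _ => 0
  | .top => 0
  | .and φ ψ => max φ.bindDepth ψ.bindDepth
  | .not φ => φ.bindDepth
  | .dia _ φ => φ.bindDepth
  | .bindW _ _ φ => φ.bindDepth + 1

/-- All `↓_{W}` operators in the formula use radius `r`. -/
def GMLW.radIs {p : ℕ} (r : ℕ) : GMLW p → Prop
  | .prop _ => True
  | .var _ => True
  | .top => True
  | .and φ ψ => φ.radIs r ∧ ψ.radIs r
  | .not φ => φ.radIs r
  | .dia _ φ => φ.radIs r
  | .bindW _ r' φ => r' = r ∧ φ.radIs r

noncomputable def GMLW.satS {p : ℕ} (G : LabGraph p) (φ : GMLW p) (v : G.V) : Prop :=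
  φ.sat G (fun _ => none) v
/-! ### Weisfeiler–Leman and Individualization-Refinement -/

/-- An (ordered) space of colors together with a perfect (injective) hash
function whose domains are: node labelings (initial colors), pairs of a color
and a multiset of colors (refinement), and pairs of a color and a marking
(individualization). -/
structure HashSetup (p : ℕ) : Type 1 where
  C : Type
  linC : LinearOrder C
  hInit : (Fin p → Prop) → C
  hRefine : C → Multiset C → C
  hIndiv : C → Prop → C
  inj : Function.Injective
    (Sum.elim hInit (Sum.elim (fun y : C × Multiset C => hRefine y.1 y.2)
      (fun y : C × Prop => hIndiv y.1 y.2)))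

/-- A coloring is discrete if all color classes are singletons. -/
def Discrete {V C : Type} (col : V → C) : Prop :=
  ∀ u w, col u = col w → u = w

/-- One round of color refinement. -/
noncomputable def wlStep {p : ℕ} (H : HashSetup p) (G : LabGraph p)
    (col : G.V → H.C) : G.V → H.C :=
  fun v => H.hRefine (col v) ((G.nbrFinset v).val.map col)

/-- `wlIter H G d col` = `WL(G, col, d)`. -/
noncomputable def wlIter {p : ℕ} (H : HashSetup p) (G : LabGraph p) :
    ℕ → (G.V → H.C) → (G.V → H.C)
  | 0, col => col
  | (d+1), col => wlStep H G (wlIter H G d col)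

/-- The initial coloring `col_G`. -/
noncomputable def initCol {p : ℕ} (H : HashSetup p) (G : LabGraph p) : G.V → H.C :=
  fun v => H.hInit (G.lab v)

/-- Rose trees labeled by multisets of colors.  (Children are kept in a list;
the isomorphism relation below disregards their order.) -/
inductive CTree (C : Type) : Type
  | node (label : Multiset C) (children : List (CTree C))

/-- Isomorphism of trees whose nodes are labeled by multisets of colors. -/
inductive CTree.Iso {C : Type} : CTree C → CTree C → Prop
  | node {l : Multiset C} {cs1 cs2 : List (CTree C)}
      (e : Fin cs1.length ≃ Fin cs2.length)
      (h : ∀ i : Fin cs1.length, CTree.Iso (cs1.get i) (cs2.get (e i))) :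
      CTree.Iso (.node l cs1) (.node l cs2)

/-- The multiset of all colors of a coloring. -/
noncomputable def colMultiset {p : ℕ} (H : HashSetup p) (G : LabGraph p)
    (col : G.V → H.C) : Multiset H.C :=
  Finset.univ.val.map col

/-- `WLIR H G d col` = the IR tree `WL-IR(G, col, d)` with at most `d`
individualization steps, with colorings recorded by their color multisets. -/
noncomputable def WLIR {p : ℕ} (H : HashSetup p) (G : LabGraph p) :
    ℕ → (G.V → H.C) → CTree H.C
  | 0, col => .node (colMultiset H G (wlIter H G (Fintype.card G.V) col)) []
  | (d+1), col =>
    let col' := wlIter H G (Fintype.card G.V) col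
    if hdisc : Discrete col' then .node (colMultiset H G col') []
    else
      letI := H.linC
      let bigs : Finset H.C := (Finset.univ.image col').filter
        (fun c => 1 < (Finset.univ.filter (fun v => col' v = c)).card)
      have hne : bigs.Nonempty := by
        simp only [Discrete, not_forall] at hdisc
        obtain ⟨u, w, hc, hne'⟩ := hdisc
        refine ⟨col' u, Finset.mem_filter.mpr
          ⟨Finset.mem_image_of_mem _ (Finset.mem_univ u), ?_⟩⟩
        exact Finset.one_lt_card.mpr
          ⟨u, by simp, w, by simp [hc.symm], hne'⟩
      let c := bigs.min' hne
      .node (colMultiset H G col')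
        (((Finset.univ.filter (fun v => col' v = c)).toList).map
          (fun vi => WLIR H G d (fun v => H.hIndiv (col' v) (v = vi))))

/-- `G ≡_{WL-IR-d} G'` : the IR trees with `d` individualization steps are
isomorphic. -/
noncomputable def WLIRequiv {p : ℕ} (H : HashSetup p) (G G' : LabGraph p) (d : ℕ) : Prop :=
  CTree.Iso (WLIR H G d (initCol H G)) (WLIR H G' d (initCol H G'))

/-- Isomorphism of labeled graphs. -/
def LabGraph.Iso {p : ℕ} (G G' : LabGraph p) : Prop :=
  ∃ f : G.V ≃ G'.V, (∀ u v, G.adj u v ↔ G'.adj (f u) (f v)) ∧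
    ∀ v i, G.lab v i ↔ G'.lab (f v) i
/-! ### The k-dimensional Weisfeiler–Leman test -/

/-- The type of `k`-WL colors after `i` refinement rounds (shared between all
graphs, so colors of different graphs are directly comparable). -/
def KColor (p k : ℕ) : ℕ → Type
  | 0 => ((Fin k → Fin k → Prop) × (Fin k → Fin k → Prop) × (Fin k → Fin p → Prop))
  | (i+1) => KColor p k i × (Fin k → Multiset (KColor p k i))

/-- The `k`-WL coloring of `k`-tuples after `i` rounds: the initial color is the
isomorphism type of the tuple (equalities, adjacencies, labels); each round
refines by, for each position, the multiset of colors of all one-point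
modifications of the tuple. -/
noncomputable def kwl (p k : ℕ) (G : LabGraph p) :
    (i : ℕ) → (Fin k → G.V) → KColor p k i
  | 0, t => (fun i j => t i = t j, fun i j => G.adj (t i) (t j), fun i a => G.lab (t i) a)
  | (i+1), t => (kwl p k G i t,
      fun j => Finset.univ.val.map (fun w => kwl p k G i (Function.update t j w)))

/-- `(G,v)` and `(G',v')` are *not* distinguished by the `k`-dimensional WL test:
the colors of the constant tuples `(v,…,v)` and `(v',…,v')` agree at every round
(equivalently, the stable colors agree). -/
noncomputable def kwlEquiv (p k : ℕ) (G : LabGraph p) (v : G.V) (G' : LabGraph p) (v' : G'.V) : Prop :=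
  ∀ i : ℕ, kwl p k G i (fun _ => v) = kwl p k G' i (fun _ => v')
/-! ### Rooted graphs, homomorphism counts, Sum/ReLU-FFNN GNNs, degree bounds -/

namespace LabGraph
variable {p : ℕ}

/-- `(F,u)` is a rooted graph: every node is reachable from `u`. -/
def Rooted (F : LabGraph p) (u : F.V) : Prop := ∀ w, ∃ r, F.within u r w

/-- Every node of `G` has degree at most `N`. -/
def degLe (G : LabGraph p) (N : ℕ) : Prop := ∀ v, Nat.card {u : G.V // G.adj v u} ≤ N

end LabGraph

/-- The number of homomorphisms from the pointed graph `(F,u)` to `(G,v)`: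
maps sending the root to `v`, preserving edges, and preserving labels. -/
noncomputable def homCount {p : ℕ} (F G : LabGraph p) (u : F.V) (v : G.V) : ℕ :=
  Nat.card {h : F.V → G.V //
    h u = v ∧ (∀ ⦃w w'⦄, F.adj w w' → G.adj (h w) (h w')) ∧
    ∀ w i, F.lab w i → G.lab (h w) i}

/-- Pointwise sum aggregation. -/
def sumAgg (D : ℕ) : Multiset (Fin D → ℝ) → (Fin D → ℝ) :=
  fun M i => (M.map (fun x => x i)).sum

/-- ReLU feed-forward neural networks: compositions of affine maps and
coordinatewise ReLU. -/
inductive IsReLUFFNN : {n m : ℕ} → ((Fin n → ℝ) → (Fin m → ℝ)) → Prop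
  | affine {n m : ℕ} (W : Matrix (Fin m) (Fin n) ℝ) (b : Fin m → ℝ) :
      IsReLUFFNN (fun x => W.mulVec x + b)
  | relu {n : ℕ} : IsReLUFFNN (fun (x : Fin n → ℝ) i => max 0 (x i))
  | comp {n m k : ℕ} {f : (Fin n → ℝ) → (Fin m → ℝ)} {g : (Fin m → ℝ) → (Fin k → ℝ)} :
      IsReLUFFNN f → IsReLUFFNN g → IsReLUFFNN (fun x => g (f x))

/-- A layer uses Sum aggregation and a ReLU-FFNN combination function. -/
def GNNLayer.SumReLU {Din Dout : ℕ} (l : GNNLayer Din Dout) : Prop :=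
  l.agg = sumAgg Din ∧ IsReLUFFNN l.com

def GNN.SumReLU : {D D' : ℕ} → GNN D D' → Prop
  | _, _, .last l => l.SumReLU
  | _, _, .cons l rest => l.SumReLU ∧ rest.SumReLU

def HEGNN.SumReLU : {d D D' : ℕ} → HEGNN d D D' → Prop
  | _, _, _, .base A => A.SumReLU
  | _, _, _, .nest B C => B.SumReLU ∧ C.SumReLU
/-! ### Cycles, acyclicity, ego-rank, tree-width -/

namespace LabGraph
variable {p : ℕ}

/-- There is a cycle (length ≥ 3, distinct nodes, consecutive nodes adjacent,
cyclically) all of whose nodes lie in `S`. -/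
def CycleIn (G : LabGraph p) (S : Set G.V) : Prop :=
  ∃ (n : ℕ) (c : Fin n → G.V), 3 ≤ n ∧ Function.Injective c ∧ (∀ i, c i ∈ S) ∧
    ∀ i : Fin n, G.adj (c i) (c ⟨(i.val + 1) % n, Nat.mod_lt _ i.pos⟩)

/-- `G` is acyclic. -/
def Acyclic (G : LabGraph p) : Prop := ¬ G.CycleIn Set.univ

/-- `(G,v)` is c-acyclic: every cycle of `G` passes through `v`. -/
def CAcyclic (G : LabGraph p) (v : G.V) : Prop :=
  ∀ (n : ℕ) (c : Fin n → G.V), 3 ≤ n → Function.Injective c →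
    (∀ i : Fin n, G.adj (c i) (c ⟨(i.val + 1) % n, Nat.mod_lt _ i.pos⟩)) →
    ∃ i, c i = v

/-- Reachability inside a set `S` (paths are required to stay in `S`). -/
inductive ReachIn (G : LabGraph p) (S : Set G.V) : G.V → G.V → Prop
  | refl {a} (ha : a ∈ S) : ReachIn G S a a
  | tail {a b c} : ReachIn G S a b → G.adj b c → c ∈ S → ReachIn G S a c

/-- The set `S` induces a connected subgraph. -/
def ConnectedIn (G : LabGraph p) (S : Set G.V) : Prop :=
  ∀ a ∈ S, ∀ b ∈ S, G.ReachIn S a b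

/-- `G` is connected. -/
def Connected (G : LabGraph p) : Prop := ∀ a b : G.V, ∃ r, G.within a r b

end LabGraph

/-! #### Ego-rank -/

/-- Transitive closure of a partial map `dep` (so `DepCl dep w x` means
`x ∈ deps(w) = {dep(w), dep(dep(w)), …} \ {⊥}`). -/
inductive DepCl {V : Type} (dep : V → Option V) : V → V → Prop
  | base {w x} : dep w = some x → DepCl dep w x
  | step {w x y} : DepCl dep w x → dep x = some y → DepCl dep w y

/-- `deps(w)` as a set. -/
def deps {V : Type} (dep : V → Option V) (w : V) : Set V := {x | DepCl dep w x}

/-- `dep` is a dependency function for the rooted graph `(G,v)`. -/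
def IsDepFun {p : ℕ} (G : LabGraph p) (v : G.V) (dep : G.V → Option G.V) : Prop :=
  dep v = none ∧
  (∀ {w u}, G.adj w u → dep w = dep u ∨ w ∈ deps dep u ∨ u ∈ deps dep w) ∧
  (∀ o : Option G.V, ¬ G.CycleIn {w | dep w = o})

/-- The node rank of a node: `|deps(w)|`. -/
noncomputable def nodeRank {V : Type} (dep : V → Option V) (w : V) : ℕ :=
  Nat.card {x // DepCl dep w x}

/-- Ego-rank: the smallest achievable maximum node rank over all dependency
functions. -/
noncomputable def egoRank {p : ℕ} (G : LabGraph p) (v : G.V) : ℕ :=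
  sInf {k | ∃ dep, IsDepFun G v dep ∧ ∀ w, nodeRank dep w ≤ k}

/-! #### Tree decompositions and tree-width -/

/-- A tree decomposition of `G`: a (connected, acyclic) tree `T` with bags
covering all nodes and edges, such that each node's bags form a connected
subtree. -/
structure TreeDecomp (p : ℕ) (G : LabGraph p) : Type 1 where
  T : LabGraph 0
  conn : T.Connected
  acyc : T.Acyclic
  bag : T.V → Set G.V
  cover_v : ∀ u : G.V, ∃ t, u ∈ bag t
  cover_e : ∀ {u w : G.V}, G.adj u w → ∃ t, u ∈ bag t ∧ w ∈ bag t
  subtree : ∀ u : G.V, T.ConnectedIn {t | u ∈ bag t}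

/-- Tree-width: minimum over tree decompositions of (maximum bag size − 1). -/
noncomputable def treewidth {p : ℕ} (G : LabGraph p) : ℕ :=
  sInf {w | ∃ D : TreeDecomp p G, ∀ t, Nat.card (D.bag t) ≤ w + 1}
/-! ### Special graphs: cycles, disjoint unions, grids (all labels empty) -/

/-- The cycle graph `C_n` (for `n ≥ 3`), with empty node labels. -/
def cycleGraph (p n : ℕ) : LabGraph p where
  V := Fin n
  fintypeV := inferInstance
  decEqV := inferInstance
  adj i j := i ≠ j ∧ ((i.val + 1) % n = j.val ∨ (j.val + 1) % n = i.val)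
  symm h := ⟨h.1.symm, h.2.symm⟩
  irrefl _ h := h.1 rfl
  lab _ _ := False

/-- Disjoint union of two graphs. -/
def LabGraph.disjUnion {p : ℕ} (G1 G2 : LabGraph p) : LabGraph p where
  V := G1.V ⊕ G2.V
  fintypeV := inferInstance
  decEqV := inferInstance
  adj a b :=
    match a, b with
    | .inl x, .inl y => G1.adj x y
    | .inr x, .inr y => G2.adj x y
    | _, _ => False
  symm {a b} h := by
    cases a <;> cases b <;> simp_all <;> first | exact G1.symm h | exact G2.symm h
  irrefl a h := by
    cases a
    · exact G1.irrefl _ h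
    · exact G2.irrefl _ h
  lab a i :=
    match a with
    | .inl x => G1.lab x i
    | .inr x => G2.lab x i

/-- The `n × 2` grid graph, with empty node labels. -/
def gridGraph (p n : ℕ) : LabGraph p where
  V := Fin n × Fin 2
  fintypeV := inferInstance
  decEqV := inferInstance
  adj a b := (a.2 = b.2 ∧ (a.1.val + 1 = b.1.val ∨ b.1.val + 1 = a.1.val)) ∨
    (a.1 = b.1 ∧ a.2 ≠ b.2)
  symm h := by
    rcases h with ⟨h1, h2⟩ | ⟨h1, h2⟩
    · exact Or.inl ⟨h1.symm, h2.symm⟩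
    · exact Or.inr ⟨h1.symm, h2.symm⟩
  irrefl a h := by
    rcases h with ⟨_, h2 | h2⟩ | ⟨_, h2⟩
    · omega
    · omega
    · exact h2 rfl
  lab _ _ := False
/-! ### The witness graphs of Rattan–Seppelt: a central 4-cycle with attached
triangles and 6-cycles. -/

/-- Vertex type: 4 square nodes, 4 triangles (3 nodes each), 4 hexagons
(6 nodes each). -/
abbrev RSV : Type := Fin 4 ⊕ (Fin 4 × Fin 3) ⊕ (Fin 4 × Fin 6)

/-- Adjacency, parameterized by the owner (square corner) of each triangle and
of each hexagon: the square is a 4-cycle; each triangle/hexagon is complete to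
its owner; triangles are 3-cycles, hexagons are 6-cycles. -/
def rsAdj (tO hO : Fin 4 → Fin 4) : RSV → RSV → Prop
  | .inl a, .inl b => a ≠ b ∧ ((a.val + 1) % 4 = b.val ∨ (b.val + 1) % 4 = a.val)
  | .inl a, .inr (.inl (t, _)) => a = tO t
  | .inr (.inl (t, _)), .inl a => a = tO t
  | .inl a, .inr (.inr (s, _)) => a = hO s
  | .inr (.inr (s, _)), .inl a => a = hO s
  | .inr (.inl (t, i)), .inr (.inl (t', i')) => t = t' ∧ i ≠ i'
  | .inr (.inr (s, j)), .inr (.inr (s', j')) =>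
      s = s' ∧ ((j.val + 1) % 6 = j'.val ∨ (j'.val + 1) % 6 = j.val)
  | _, _ => False

def rsGraph (p : ℕ) (tO hO : Fin 4 → Fin 4) : LabGraph p where
  V := RSV
  fintypeV := inferInstance
  decEqV := inferInstance
  adj := rsAdj tO hO
  symm {u v} h := by
    rcases u with a | ⟨t, i⟩ | ⟨s, j⟩ <;> rcases v with b | ⟨t', i'⟩ | ⟨s', j'⟩ <;>
      simp only [rsAdj] at h ⊢ <;> tauto
  irrefl u h := by
    rcases u with a | ⟨t, i⟩ | ⟨s, j⟩ <;> simp only [rsAdj] at h <;> omega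
  lab _ _ := False

/-- `G`: triangles attached to `u₁` (index 0) and `u₄` (index 3), hexagons to
`u₂` (index 1) and `u₃` (index 2). -/
def rsG (p : ℕ) : LabGraph p :=
  rsGraph p (fun t => if t.val < 2 then 0 else 3) (fun s => if s.val < 2 then 1 else 2)

/-- `G'`: triangles attached to the opposite corners `u₁` (index 0) and `u₃`
(index 2), hexagons to `u₂` (index 1) and `u₄` (index 3). -/
def rsG' (p : ℕ) : LabGraph p :=
  rsGraph p (fun t => if t.val < 2 then 0 else 2) (fun s => if s.val < 2 then 1 else 3)
/-! ### Graph-level separation by node classifiers -/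

/-- `G ≡_{GNN} G'`: for every GNN node classifier, the multisets of classifier
values over all nodes coincide. -/
noncomputable def gnnGraphEquiv (p : ℕ) (G G' : LabGraph p) : Prop :=
  ∀ A : GNN p 1, Finset.univ.val.map (A.cls G) = Finset.univ.val.map (A.cls G')

/-- `G ≡_{HE-GNN-(d)} G'`: for every HE-GNN node classifier of nesting depth
`d`, the multisets of classifier values over all nodes coincide. -/
noncomputable def hegnnGraphEquiv (p d : ℕ) (G G' : LabGraph p) : Prop :=
  ∀ A : HEGNN d p 1, Finset.univ.val.map (A.cls G) = Finset.univ.val.map (A.cls G')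

/-- The eccentricity of `u` in `G`: the maximal distance from `u` to any node. -/
noncomputable def LabGraph.eccFrom {p : ℕ} (G : LabGraph p) (u : G.V) : ℕ :=
  Finset.univ.sup (fun w => sInf {r | G.within u r w})


section Aux
open Classical

/-- Injective encoding of a countable type into `ℝ`. -/
noncomputable def cEmb (τ : Type) [Countable τ] : τ → ℝ :=
  fun t => ((exists_injective_nat τ).choose t : ℝ)

theorem cEmb_inj (τ : Type) [Countable τ] : Function.Injective (cEmb τ) :=
  fun a b h => (exists_injective_nat τ).choose_spec (Nat.cast_injective h)

/-- Injective encoding of multisets of `Fin 1 → ℝ` vectors into `Fin 1 → ℝ`. -/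
noncomputable def mEmb : Multiset (Fin 1 → ℝ) → (Fin 1 → ℝ) :=
  fun M _ => ((Cardinal.le_def (List ℝ) ℝ).1 (Cardinal.mk_list_eq_mk ℝ).le).some
    (Quotient.out (M.map (fun x => x 0)))

theorem mEmb_inj : Function.Injective mEmb := by
  intro M N h
  have h0 : Function.Injective (fun x : Fin 1 → ℝ => x 0) := by
    intro a b hab; funext i
    have : i = 0 := Subsingleton.elim _ _
    subst this; exact hab
  have := congrFun h 0
  have h2 := ((Cardinal.le_def (List ℝ) ℝ).1 (Cardinal.mk_list_eq_mk ℝ).le).some.injective this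
  have h3 : (M.map (fun x => x 0)) = (N.map (fun x => x 0)) := Quotient.out_injective h2
  exact Multiset.map_injective h0 h3

/-- The multi-hot encoding of an abstract label. -/
noncomputable def multihot {q : ℕ} (t : Fin q → Prop) : Fin q → ℝ :=
  fun i => if t i then 1 else 0

theorem multihot_inj {q : ℕ} : Function.Injective (multihot (q := q)) := by
  intro a b h; funext i
  have := congrFun h i
  unfold multihot at this
  by_cases ha : a i <;> by_cases hb : b i <;> simp [ha, hb] at this ⊢ <;> tauto

theorem embG_eq_multihot {q : ℕ} (G : LabGraph q) :
    G.embG = fun u => multihot (fun i => G.lab u i) := rfl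

/-- Counting neighbours satisfying a predicate, as a multiset count. -/
theorem natCard_adj {q : ℕ} (G : LabGraph q) (v : G.V) (P : G.V → Prop) :
    Nat.card {u : G.V // G.adj v u ∧ P u} = ((G.nbrFinset v).val.filter P).card := by
  classical
  rw [Nat.card_eq_fintype_card, Fintype.card_subtype]
  have : (G.nbrFinset v).filter P = Finset.univ.filter (fun u => G.adj v u ∧ P u) := by
    rw [LabGraph.nbrFinset, Finset.filter_filter]
  rw [← this, Finset.card_def, Finset.filter_val]

/-! #### Iterated refinement colours -/

/-- `Iter τ k`: the type of depth-`k` refinement colours over initial colours `τ`. -/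
def Iter (τ : Type) : ℕ → Type
  | 0 => τ
  | (k+1) => Iter τ k × Multiset (Iter τ k)

instance iterCountable (τ : Type) [Countable τ] : ∀ k, Countable (Iter τ k)
  | 0 => by unfold Iter; infer_instance
  | (k+1) => by
      haveI := iterCountable τ k
      unfold Iter; infer_instance

/-- Depth-`k` colour refinement of an initial colouring `γ`. -/
noncomputable def rcol {q : ℕ} (G : LabGraph q) {τ : Type} (γ : G.V → τ) :
    (k : ℕ) → G.V → Iter τ k
  | 0 => γ
  | (k+1) => fun v => (rcol G γ k v, (G.nbrFinset v).val.map (rcol G γ k))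

/-- Functorial action on `Iter`. -/
def IterMap {τ σ : Type} (h : τ → σ) : ∀ k, Iter τ k → Iter σ k
  | 0 => h
  | (k+1) => fun a => (IterMap h k a.1, a.2.map (IterMap h k))

theorem IterMap_inj {τ σ : Type} {h : τ → σ} (hh : Function.Injective h) :
    ∀ k, Function.Injective (IterMap h k)
  | 0 => hh
  | (k+1) => by
      intro a b hab
      have h1 := congrArg Prod.fst hab
      have h2 := congrArg Prod.snd hab
      exact Prod.ext (IterMap_inj hh k h1) (Multiset.map_injective (IterMap_inj hh k) h2)

theorem rcol_map {q : ℕ} (G : LabGraph q) {τ σ : Type} (h : τ → σ) (γ : G.V → τ) :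
    ∀ k v, rcol G (fun u => h (γ u)) k v = IterMap h k (rcol G γ k v)
  | 0, v => rfl
  | (k+1), v => by
      show (_, _) = IterMap h (k+1) (rcol G γ k v, (G.nbrFinset v).val.map (rcol G γ k))
      unfold IterMap
      rw [rcol_map G h γ k v, Multiset.map_map]
      exact congrArg _ (Multiset.map_congr rfl (fun u _ => rcol_map G h γ k u))

/-- Determination of shallower refinements from deeper ones. -/
theorem rcol_det {τ : Type} (j : ℕ) : ∀ (k : ℕ), j ≤ k →
    ∃ π : Iter τ k → Iter τ j, ∀ {q : ℕ} (G : LabGraph q) (γ : G.V → τ) v,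
      rcol G γ j v = π (rcol G γ k v) := by
  intro k
  induction k with
  | zero => intro h; exact ⟨(Nat.le_zero.1 h ▸ id : Iter τ 0 → Iter τ j), by
      intro q G γ v
      rcases Nat.le_zero.1 h with rfl; rfl⟩
  | succ k ih =>
      intro h
      rcases Nat.lt_or_ge j (k+1) with h' | h'
      · obtain ⟨π, hπ⟩ := ih (Nat.lt_succ_iff.1 h')
        exact ⟨π ∘ Prod.fst, fun G γ v => hπ G γ v⟩
      · have : j = k + 1 := le_antisymm h h'
        subst this; exact ⟨id, fun G γ v => rfl⟩

/-- Reassociation `Iter τ (k+1) → Iter (Iter τ 1) k`. -/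
def iterShift {τ : Type} : ∀ k, Iter τ (k+1) → Iter (Iter τ 1) k
  | 0 => id
  | (k+1) => fun a => (iterShift k a.1, a.2.map (iterShift k))

theorem iterShift_inj {τ : Type} : ∀ k, Function.Injective (iterShift (τ := τ) k)
  | 0 => fun a b h => h
  | (k+1) => by
      intro a b hab
      have h1 := congrArg Prod.fst hab
      have h2 := congrArg Prod.snd hab
      exact Prod.ext (iterShift_inj k h1) (Multiset.map_injective (iterShift_inj k) h2)

theorem rcol_shift {q : ℕ} (G : LabGraph q) {τ : Type} (γ : G.V → τ) :
    ∀ k v, rcol G (rcol G γ 1) k v = iterShift k (rcol G γ (k+1) v)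
  | 0, v => rfl
  | (k+1), v => by
      show (_, _) = iterShift (k+1) (rcol G γ (k+1) v, (G.nbrFinset v).val.map (rcol G γ (k+1)))
      unfold iterShift
      rw [rcol_shift G γ k v, Multiset.map_map]
      exact congrArg _ (Multiset.map_congr rfl (fun u _ => rcol_shift G γ k u))

/-! #### Hierarchical colours -/

/-- The type of hierarchical colours of nesting depth `d`, refinement depth `k`. -/
def ghT : ℕ → Type → ℕ → Type
  | 0, τ, k => Iter τ k
  | (d+1), τ, k => Iter (τ × ghT d (τ × Prop) k) k

instance ghTCountable : ∀ (d : ℕ) (τ : Type) [Countable τ] (k : ℕ), Countable (ghT d τ k)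
  | 0, τ, _, k => by unfold ghT; infer_instance
  | (d+1), τ, _, k => by
      haveI := ghTCountable d (τ × Prop) k
      unfold ghT; infer_instance

/-- Hierarchical colouring: at each nesting level the current node is marked and
the inner hierarchical colour is added to the initial colours, then refined. -/
noncomputable def ghcol : (d k : ℕ) → {q : ℕ} → (G : LabGraph q) → {τ : Type} →
    (G.V → τ) → G.V → ghT d τ k
  | 0, k, _, G, _, γ => rcol G γ k
  | (d+1), k, _, G, _, γ =>
      rcol G (fun u => (γ u, ghcol d k G (fun w => (γ w, w = u)) u)) k

theorem ghcol_det : ∀ (d : ℕ) (τ : Type) (j k : ℕ), j ≤ k →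
    ∃ π : ghT d τ k → ghT d τ j, ∀ {q : ℕ} (G : LabGraph q) (γ : G.V → τ) v,
      ghcol d j G γ v = π (ghcol d k G γ v)
  | 0, τ, j, k, h => rcol_det j k h
  | (d+1), τ, j, k, h => by
      obtain ⟨πin, hin⟩ := ghcol_det d (τ × Prop) j k h
      obtain ⟨πr, hr⟩ := rcol_det (τ := τ × ghT d (τ × Prop) k) j k h
      refine ⟨IterMap (Prod.map id πin) j ∘ πr, ?_⟩
      intro q G γ v
      show rcol G (fun u => (γ u, ghcol d j G (fun w => (γ w, w = u)) u)) j v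
        = (IterMap (Prod.map id πin) j ∘ πr)
          (rcol G (fun u => (γ u, ghcol d k G (fun w => (γ w, w = u)) u)) k v)
      have h1 : (fun u => (γ u, ghcol d j G (fun w => (γ w, w = u)) u)) =
          fun u => (Prod.map id πin)
            ((fun u' => (γ u', ghcol d k G (fun w => (γ w, w = u')) u')) u) := by
        funext u; simp [Prod.map, hin G _ u]
      rw [h1, rcol_map G (Prod.map id πin)
        (fun u' => (γ u', ghcol d k G (fun w => (γ w, w = u')) u')) j v,
        hr G (fun u' => (γ u', ghcol d k G (fun w => (γ w, w = u')) u')) v]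
      rfl

/-- Reading off the initial colour from a hierarchical colour. -/
theorem ghcol_read : ∀ (d : ℕ) (τ : Type) (k : ℕ),
    ∃ r : ghT d τ k → τ, ∀ {q : ℕ} (G : LabGraph q) (γ : G.V → τ) v,
      r (ghcol d k G γ v) = γ v
  | 0, τ, k => by
      obtain ⟨π, hπ⟩ := rcol_det (τ := τ) 0 k (Nat.zero_le k)
      exact ⟨π, fun G γ v => (hπ G γ v).symm⟩
  | (d+1), τ, k => by
      obtain ⟨π, hπ⟩ := rcol_det (τ := τ × ghT d (τ × Prop) k) 0 k (Nat.zero_le k)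
      exact ⟨Prod.fst ∘ π, fun G γ v => by
        show (π (rcol G (fun u => (γ u, ghcol d k G (fun w => (γ w, w = u)) u)) k v)).1 = γ v
        rw [← hπ G _ v]; rfl⟩

/-- Reading off the inner (marked) hierarchical colour. -/
theorem ghcol_read_inner (d : ℕ) (τ : Type) (k : ℕ) :
    ∃ r : ghT (d+1) τ k → ghT d (τ × Prop) k, ∀ {q : ℕ} (G : LabGraph q) (γ : G.V → τ) v,
      r (ghcol (d+1) k G γ v) = ghcol d k G (fun w => (γ w, w = v)) v := by
  obtain ⟨π, hπ⟩ := rcol_det (τ := τ × ghT d (τ × Prop) k) 0 k (Nat.zero_le k)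
  exact ⟨Prod.snd ∘ π, fun G γ v => by
    show (π (rcol G (fun u => (γ u, ghcol d k G (fun w => (γ w, w = u)) u)) k v)).2 = _
    rw [← hπ G _ v]; rfl⟩

/-- Neighbour multisets of hierarchical colours are determined. -/
theorem ghcol_nbr : ∀ (d : ℕ) (τ : Type) (k : ℕ),
    ∃ F : ghT d τ (k+1) → Multiset (ghT d τ k), ∀ {q : ℕ} (G : LabGraph q) (γ : G.V → τ) v,
      F (ghcol d (k+1) G γ v) = (G.nbrFinset v).val.map (fun u => ghcol d k G γ u)
  | 0, τ, k => ⟨Prod.snd, fun G γ v => rfl⟩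
  | (d+1), τ, k => by
      obtain ⟨πin, hin⟩ := ghcol_det d (τ × Prop) k (k+1) (Nat.le_succ k)
      refine ⟨fun a => (a.2.map (IterMap (Prod.map id πin) k)), ?_⟩
      intro q G γ v
      show ((ghcol (d+1) (k+1) G γ v).2).map _ = _
      have e1 : (ghcol (d+1) (k+1) G γ v).2
          = (G.nbrFinset v).val.map
            (rcol G (fun u => (γ u, ghcol d (k+1) G (fun w => (γ w, w = u)) u)) k) := rfl
      erw [e1, Multiset.map_map]
      refine Multiset.map_congr rfl (fun u _ => ?_)
      show IterMap (Prod.map id πin) k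
          (rcol G (fun u' => (γ u', ghcol d (k+1) G (fun w => (γ w, w = u')) u')) k u)
        = rcol G (fun u' => (γ u', ghcol d k G (fun w => (γ w, w = u')) u')) k u
      rw [← rcol_map]
      congr 1
      funext w; simp [Prod.map, hin G _ w]

end Aux
section Sound
open Classical

/-- A single layer applied to an embedding that factors through a colouring
factors through one refinement step. -/
theorem layer_factor {q Din Dout : ℕ} (l : GNNLayer Din Dout) (G : LabGraph q)
    {τ : Type} (g : τ → Fin Din → ℝ) (γ : G.V → τ) :
    l.apply G (fun u => g (γ u)) =
      fun v => (fun a : Iter τ 1 => l.com (Fin.append (g a.1) (l.agg (a.2.map g))))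
        (rcol G γ 1 v) := by
  funext v
  have h2 : Multiset.map g (rcol G γ 1 v).2
      = Multiset.map (fun u => g (γ u)) (G.nbrFinset v).val := by
    show Multiset.map g (Multiset.map γ (G.nbrFinset v).val) = _
    rw [Multiset.map_map]; rfl
  show l.com (Fin.append (g (γ v)) (l.agg (Multiset.map (fun u => g (γ u)) (G.nbrFinset v).val)))
    = l.com (Fin.append (g (rcol G γ 1 v).1) (l.agg (Multiset.map g (rcol G γ 1 v).2)))
  rw [h2]; rfl

/-- Soundness of GNNs: the run factors through refinement colours. -/
theorem gnn_sound : ∀ {D D' : ℕ} (A : GNN D D') (τ : Type) (g : τ → Fin D → ℝ),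
    ∃ (k : ℕ) (f : Iter τ k → Fin D' → ℝ), ∀ {q : ℕ} (G : LabGraph q) (γ : G.V → τ) (v : G.V),
      A.run G (fun u => g (γ u)) v = f (rcol G γ k v)
  | _, _, .last l, τ, g =>
      ⟨1, fun a => l.com (Fin.append (g a.1) (l.agg (a.2.map g))), by
        intro q G γ v
        exact congrFun (layer_factor l G g γ) v⟩
  | _, _, .cons l rest, τ, g => by
      obtain ⟨k, f, hf⟩ := gnn_sound rest (Iter τ 1)
        (fun a => l.com (Fin.append (g a.1) (l.agg (a.2.map g))))
      refine ⟨k + 1, fun a => f (iterShift k a), ?_⟩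
      intro q G γ v
      show rest.run G (l.apply G (fun u => g (γ u))) v = _
      rw [layer_factor l G g γ]
      rw [hf G (rcol G γ 1) v, rcol_shift G γ k v]

/-- Soundness of HE-GNNs: the run factors through hierarchical colours. -/
theorem hegnn_sound : ∀ {d D D' : ℕ} (A : HEGNN d D D') (τ : Type) (g : τ → Fin D → ℝ),
    ∃ (k : ℕ) (f : ghT d τ k → Fin D' → ℝ), ∀ {q : ℕ} (G : LabGraph q) (γ : G.V → τ) (v : G.V),
      A.run G (fun u => g (γ u)) v = f (ghcol d k G γ v)
  | _, _, _, .base A, τ, g => gnn_sound A τ g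
  | d+1, D, _, .nest B C, τ, g => by
      obtain ⟨kB, fB, hB⟩ := hegnn_sound B (τ × Prop)
        (fun tm => Fin.append (g tm.1) (fun _ => if tm.2 then (1:ℝ) else 0))
      obtain ⟨kC, fC, hC⟩ := gnn_sound C (τ × ghT d (τ × Prop) kB)
        (fun th => Fin.append (g th.1) (fB th.2))
      set k := max kB kC with hk
      obtain ⟨πin, hin⟩ := ghcol_det d (τ × Prop) kB k (le_max_left _ _)
      obtain ⟨πr, hr⟩ := rcol_det (τ := τ × ghT d (τ × Prop) k) kC k (le_max_right _ _)
      refine ⟨k, fun a => fC (IterMap (Prod.map id πin) kC (πr a)), ?_⟩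
      intro q G γ v
      show C.run G _ v = _
      have e1 : (fun v' => Fin.append ((fun u => g (γ u)) v')
            (B.run G (fun u => Fin.append ((fun w => g (γ w)) u)
              (fun _ => if u = v' then (1:ℝ) else 0)) v')) =
          fun v' => (fun th : τ × ghT d (τ × Prop) kB => Fin.append (g th.1) (fB th.2))
            ((fun u => (γ u, ghcol d kB G (fun w => (γ w, w = u)) u)) v') := by
        funext v'
        have e2 : (fun u => Fin.append (g (γ u)) (fun _ : Fin 1 => if u = v' then (1:ℝ) else 0)) =
            fun u => (fun tm : τ × Prop => Fin.append (g tm.1)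
              (fun _ : Fin 1 => if tm.2 then (1:ℝ) else 0)) ((fun w => (γ w, w = v')) u) := by
          funext u
          exact congrArg (Fin.append (g (γ u))) (funext fun x =>
            @if_congr ℝ (u = v') (u = v') (G.decEqV u v') (propDecidable _) 1 0 1 0
              Iff.rfl rfl rfl)
        rw [e2, hB G (fun w => (γ w, w = v')) v']
      rw [e1, hC G (fun u => (γ u, ghcol d kB G (fun w => (γ w, w = u)) u)) v]
      have e3 : (fun u => (γ u, ghcol d kB G (fun w => (γ w, w = u)) u)) =
          fun u => (Prod.map id πin)
            ((fun u' => (γ u', ghcol d k G (fun w => (γ w, w = u')) u')) u) := by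
        funext u; simp [Prod.map, hin G _ u]
      rw [e3, rcol_map G (Prod.map id πin)
        (fun u' => (γ u', ghcol d k G (fun w => (γ w, w = u')) u')) kC v,
        hr G (fun u' => (γ u', ghcol d k G (fun w => (γ w, w = u')) u')) v]
      rfl

end Sound
section Complete
open Classical

theorem iter_isEmpty {τ : Type} (h : IsEmpty τ) : ∀ k, IsEmpty (Iter τ k)
  | 0 => h
  | (k+1) => by
      haveI := iter_isEmpty h k
      unfold Iter; infer_instance

/-- Appending a final layer to a GNN. -/
def GNN.snoc : {D D' D'' : ℕ} → GNN D D' → GNNLayer D' D'' → GNN D D''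
  | _, _, _, .last l, l' => .cons l (.last l')
  | _, _, _, .cons l r, l' => .cons l (r.snoc l')

theorem GNN.run_snoc : ∀ {D D' D'' : ℕ} (A : GNN D D') (l : GNNLayer D' D'')
    {q : ℕ} (G : LabGraph q) (emb : G.V → Fin D → ℝ),
    (A.snoc l).run G emb = l.apply G (A.run G emb)
  | _, _, _, .last l0, l, _, G, emb => rfl
  | _, _, _, .cons l0 r, l, _, G, emb => GNN.run_snoc r l G (l0.apply G emb)

/-- Appending a final layer to an HE-GNN. -/
def HEGNN.snoc : {d D D' D'' : ℕ} → HEGNN d D D' → GNNLayer D' D'' → HEGNN d D D''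
  | _, _, _, _, .base A, l => .base (A.snoc l)
  | _, _, _, _, .nest B C, l => .nest B (C.snoc l)

theorem HEGNN.run_snoc : ∀ {d D D' D'' : ℕ} (A : HEGNN d D D') (l : GNNLayer D' D'')
    {q : ℕ} (G : LabGraph q) (emb : G.V → Fin D → ℝ),
    (A.snoc l).run G emb = l.apply G (A.run G emb)
  | _, _, _, _, .base A, l, _, G, emb => GNN.run_snoc A l G emb
  | _, _, _, _, .nest B C, l, _, G, emb => GNN.run_snoc C l G _

/-- Completeness for GNNs with input dimension 1. -/
theorem gnn_complete1 : ∀ (k : ℕ) (τ : Type) [Countable τ] (g : τ → Fin 1 → ℝ),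
    Function.Injective g →
    ∃ (A : GNN 1 1) (e : Iter τ k → ℝ), Function.Injective e ∧
      ∀ {q : ℕ} (G : LabGraph q) (γ : G.V → τ) (v : G.V),
        A.run G (fun u => g (γ u)) v = fun _ => e (rcol G γ k v)
  | 0, τ, _, g, hg => by
      by_cases hne : Nonempty τ
      · haveI := hne
        refine ⟨.last ⟨fun _ _ => 0,
          fun z _ => cEmb τ (Function.invFun g (fun i => z (Fin.castAdd 1 i)))⟩,
          cEmb τ, cEmb_inj τ, ?_⟩
        intro q G γ v
        show (fun _ => cEmb τ (Function.invFun g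
          (fun i => Fin.append ((fun u => g (γ u)) v) _ (Fin.castAdd 1 i)))) = _
        funext x
        rw [show (fun i => Fin.append ((fun u => g (γ u)) v)
            ((fun _ _ => (0:ℝ)) ((G.nbrFinset v).val.map (fun u => g (γ u)))) (Fin.castAdd 1 i))
            = g (γ v) from funext fun i => Fin.append_left _ _ i]
        rw [Function.leftInverse_invFun hg (γ v)]
        rfl
      · haveI := iter_isEmpty (not_nonempty_iff.1 hne) 0
        exact ⟨.last ⟨fun _ _ => 0, fun _ _ => 0⟩, isEmptyElim,
          fun a => isEmptyElim a, fun G γ v => (hne ⟨γ v⟩).elim⟩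
  | (k+1), τ, _, g, hg => by
      by_cases hne : Nonempty τ
      · haveI := hne
        set dec : (Fin 1 → ℝ) → τ := Function.invFun g with hdecdef
        have hdec : ∀ t, dec (g t) = t := Function.leftInverse_invFun hg
        set decM : (Fin 1 → ℝ) → Multiset (Fin 1 → ℝ) := Function.invFun mEmb with hdecM
        have hdecMl : ∀ M, decM (mEmb M) = M := Function.leftInverse_invFun mEmb_inj
        set e1 : Iter τ 1 → ℝ := cEmb (Iter τ 1) with he1
        set l : GNNLayer 1 1 := ⟨mEmb, fun z _ =>
          e1 (dec (fun i => z (Fin.castAdd 1 i)),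
              (decM (fun i => z (Fin.natAdd 1 i))).map dec)⟩ with hl
        have hlayer : ∀ {q : ℕ} (G : LabGraph q) (γ : G.V → τ),
            l.apply G (fun u => g (γ u)) =
              fun v => (fun c : Iter τ 1 => (fun _ : Fin 1 => e1 c)) (rcol G γ 1 v) := by
          intro q G γ
          funext v
          show (fun _ => e1 (dec (fun i => Fin.append ((fun u => g (γ u)) v)
              (mEmb ((G.nbrFinset v).val.map (fun u => g (γ u)))) (Fin.castAdd 1 i)),
              (decM (fun i => Fin.append ((fun u => g (γ u)) v)
              (mEmb ((G.nbrFinset v).val.map (fun u => g (γ u)))) (Fin.natAdd 1 i))).map dec)) = _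
          have hL : (fun i => Fin.append ((fun u => g (γ u)) v)
              (mEmb ((G.nbrFinset v).val.map (fun u => g (γ u)))) (Fin.castAdd 1 i)) = g (γ v) :=
            funext fun i => Fin.append_left _ _ i
          have hR : (fun i => Fin.append ((fun u => g (γ u)) v)
              (mEmb ((G.nbrFinset v).val.map (fun u => g (γ u)))) (Fin.natAdd 1 i))
              = mEmb ((G.nbrFinset v).val.map (fun u => g (γ u))) :=
            funext fun i => Fin.append_right _ _ i
          rw [hL, hR, hdec, hdecMl]
          have : (((G.nbrFinset v).val.map (fun u => g (γ u))).map dec)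
              = (G.nbrFinset v).val.map γ := by
            rw [Multiset.map_map]
            exact Multiset.map_congr rfl (fun u _ => hdec (γ u))
          erw [this]
          rfl
        have hg1 : Function.Injective (fun c : Iter τ 1 => (fun _ : Fin 1 => e1 c)) := by
          intro a b h
          exact cEmb_inj (Iter τ 1) (congrFun h 0)
        obtain ⟨A1, e', hinj', hA1⟩ := gnn_complete1 k (Iter τ 1)
          (fun c : Iter τ 1 => (fun _ : Fin 1 => e1 c)) hg1
        refine ⟨.cons l A1, e' ∘ iterShift k, fun a b h => iterShift_inj k (hinj' h), ?_⟩
        intro q G γ v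
        show A1.run G (l.apply G (fun u => g (γ u))) v = _
        rw [hlayer G γ, hA1 G (rcol G γ 1) v, rcol_shift G γ k v]
        rfl
      · haveI : IsEmpty τ := not_nonempty_iff.1 hne
        haveI := iter_isEmpty (not_nonempty_iff.1 hne) (k+1)
        exact ⟨.last ⟨fun _ _ => 0, fun _ _ => 0⟩, isEmptyElim,
          fun a => isEmptyElim a, fun G γ v => (hne ⟨γ v⟩).elim⟩

/-- Completeness for GNNs: refinement colours can be injectively computed. -/
theorem gnn_complete (D k : ℕ) (τ : Type) [Countable τ] (g : τ → Fin D → ℝ)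
    (hg : Function.Injective g) :
    ∃ (A : GNN D 1) (e : Iter τ k → ℝ), Function.Injective e ∧
      ∀ {q : ℕ} (G : LabGraph q) (γ : G.V → τ) (v : G.V),
        A.run G (fun u => g (γ u)) v = fun _ => e (rcol G γ k v) := by
  by_cases hne : Nonempty τ
  · haveI := hne
    set g1 : τ → Fin 1 → ℝ := fun t _ => cEmb τ t with hg1def
    have hg1 : Function.Injective g1 := fun a b h => cEmb_inj τ (congrFun h 0)
    obtain ⟨A1, e, hinj, hA1⟩ := gnn_complete1 k τ g1 hg1
    set l0 : GNNLayer D 1 := ⟨fun _ _ => 0,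
      fun z _ => cEmb τ (Function.invFun g (fun i => z (Fin.castAdd D i)))⟩ with hl0
    have hlayer : ∀ {q : ℕ} (G : LabGraph q) (γ : G.V → τ),
        l0.apply G (fun u => g (γ u)) = fun v => g1 (γ v) := by
      intro q G γ
      funext v
      show (fun _ => cEmb τ (Function.invFun g (fun i => Fin.append ((fun u => g (γ u)) v)
        ((fun _ _ => (0:ℝ)) ((G.nbrFinset v).val.map (fun u => g (γ u)))) (Fin.castAdd D i)))) = _
      rw [show (fun i => Fin.append ((fun u => g (γ u)) v)
          ((fun _ _ => (0:ℝ)) ((G.nbrFinset v).val.map (fun u => g (γ u)))) (Fin.castAdd D i))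
          = g (γ v) from funext fun i => Fin.append_left _ _ i]
      rw [Function.leftInverse_invFun hg (γ v)]
    refine ⟨.cons l0 A1, e, hinj, ?_⟩
    intro q G γ v
    show A1.run G (l0.apply G (fun u => g (γ u))) v = _
    rw [hlayer G γ, hA1 G γ v]
  · haveI : IsEmpty τ := not_nonempty_iff.1 hne
    haveI := iter_isEmpty (not_nonempty_iff.1 hne) k
    exact ⟨.last ⟨fun _ _ => 0, fun _ _ => 0⟩, isEmptyElim,
      fun a => isEmptyElim a, fun G γ v => (hne ⟨γ v⟩).elim⟩

/-- Completeness for HE-GNNs: hierarchical colours can be injectively computed. -/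
theorem hegnn_complete : ∀ (d k D : ℕ) (τ : Type) [Countable τ] (g : τ → Fin D → ℝ),
    Function.Injective g →
    ∃ (A : HEGNN d D 1) (e : ghT d τ k → ℝ), Function.Injective e ∧
      ∀ {q : ℕ} (G : LabGraph q) (γ : G.V → τ) (v : G.V),
        A.run G (fun u => g (γ u)) v = fun _ => e (ghcol d k G γ v)
  | 0, k, D, τ, _, g, hg => by
      obtain ⟨A, e, hinj, hA⟩ := gnn_complete D k τ g hg
      exact ⟨.base A, e, hinj, fun G γ v => hA G γ v⟩
  | (d+1), k, D, τ, _, g, hg => by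
      set g' : τ × Prop → Fin (D+1) → ℝ :=
        fun tm => Fin.append (g tm.1) (fun _ => if tm.2 then (1:ℝ) else 0) with hg'def
      have hg' : Function.Injective g' := by
        intro a b h
        have h1 : g a.1 = g b.1 := funext fun i => by
          have := congrFun h (Fin.castAdd 1 i)
          rwa [show g' a (Fin.castAdd 1 i) = g a.1 i from Fin.append_left _ _ i,
            show g' b (Fin.castAdd 1 i) = g b.1 i from Fin.append_left _ _ i] at this
        have h2 := congrFun h (Fin.natAdd D 0)
        rw [show g' a (Fin.natAdd D 0) = (if a.2 then (1:ℝ) else 0) from Fin.append_right _ _ 0,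
          show g' b (Fin.natAdd D 0) = (if b.2 then (1:ℝ) else 0) from Fin.append_right _ _ 0] at h2
        have h3 : a.2 ↔ b.2 := by
          by_cases ha : a.2 <;> by_cases hb : b.2 <;> simp [ha, hb] at h2 ⊢ <;> tauto
        exact Prod.ext (hg h1) (propext h3)
      obtain ⟨B, eB, hBinj, hB⟩ := hegnn_complete d k (D+1) (τ × Prop) g' hg'
      set g2 : (τ × ghT d (τ × Prop) k) → Fin (D+1) → ℝ :=
        fun th => Fin.append (g th.1) (fun _ => eB th.2) with hg2def
      have hg2 : Function.Injective g2 := by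
        intro a b h
        have h1 : g a.1 = g b.1 := funext fun i => by
          have := congrFun h (Fin.castAdd 1 i)
          rwa [show g2 a (Fin.castAdd 1 i) = g a.1 i from Fin.append_left _ _ i,
            show g2 b (Fin.castAdd 1 i) = g b.1 i from Fin.append_left _ _ i] at this
        have h2 := congrFun h (Fin.natAdd D 0)
        rw [show g2 a (Fin.natAdd D 0) = eB a.2 from Fin.append_right _ _ 0,
          show g2 b (Fin.natAdd D 0) = eB b.2 from Fin.append_right _ _ 0] at h2
        exact Prod.ext (hg h1) (hBinj h2)
      obtain ⟨C, eC, hCinj, hC⟩ := gnn_complete (D+1) k (τ × ghT d (τ × Prop) k) g2 hg2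
      refine ⟨.nest B C, eC, hCinj, ?_⟩
      intro q G γ v
      show C.run G _ v = _
      have e1 : (fun v' => Fin.append ((fun u => g (γ u)) v')
            (B.run G (fun u => Fin.append ((fun w => g (γ w)) u)
              (fun _ => if u = v' then (1:ℝ) else 0)) v')) =
          fun v' => g2 ((fun u => (γ u, ghcol d k G (fun w => (γ w, w = u)) u)) v') := by
        funext v'
        have e2 : (fun u => Fin.append (g (γ u)) (fun _ : Fin 1 => if u = v' then (1:ℝ) else 0)) =
            fun u => g' ((fun w => (γ w, w = v')) u) := by
          funext u
          exact congrArg (Fin.append (g (γ u))) (funext fun x =>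
            @if_congr ℝ (u = v') (u = v') (G.decEqV u v') (propDecidable _) 1 0 1 0
              Iff.rfl rfl rfl)
        rw [e2, hB G (fun w => (γ w, w = v')) v']
      rw [e1, hC G (fun u => (γ u, ghcol d k G (fun w => (γ w, w = u)) u)) v]
      rfl

/-- The HE-GNN classifier testing for a given hierarchical colour. -/
theorem hcol_classifier (p d k : ℕ) (c : ghT d (Fin p → Prop) k) :
    ∃ A : HEGNN d p 1, ∀ (G : LabGraph p) (v : G.V),
      A.clsP G v ↔ ghcol d k G (fun u i => G.lab u i) v = c := by
  obtain ⟨A0, e, einj, hA⟩ := hegnn_complete d k p (Fin p → Prop) multihot multihot_inj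
  refine ⟨A0.snoc ⟨fun _ _ => 0, fun z _ => if z (Fin.castAdd 1 0) = e c then 1 else 0⟩, ?_⟩
  intro G v
  unfold HEGNN.clsP
  rw [HEGNN.run_snoc]
  have hrun : A0.run G G.embG v = fun _ => e (ghcol d k G (fun u i => G.lab u i) v) := by
    rw [embG_eq_multihot G]
    exact hA G (fun u i => G.lab u i) v
  show (0:ℝ) < (fun _ : Fin 1 => if Fin.append (A0.run G G.embG v)
      ((fun _ _ => (0:ℝ)) ((G.nbrFinset v).val.map (A0.run G G.embG))) (Fin.castAdd 1 0) = e c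
      then (1:ℝ) else 0) 0 ↔ _
  rw [show Fin.append (A0.run G G.embG v)
      ((fun _ _ => (0:ℝ)) ((G.nbrFinset v).val.map (A0.run G G.embG))) (Fin.castAdd 1 0)
      = A0.run G G.embG v 0 from Fin.append_left _ _ 0, hrun]
  constructor
  · intro h
    by_cases hc : e (ghcol d k G (fun u i => G.lab u i) v) = e c
    · exact einj hc
    · simp [hc] at h
  · intro h
    simp [h]

end Complete
section LogicBasics
open Classical

/-- Satisfaction only depends on the assignment on free variables. -/
theorem sat_free {p : ℕ} : ∀ (φ : GMLd p) {G : LabGraph p} (g g' : ℕ → Option G.V),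
    (∀ x ∈ φ.free, g x = g' x) → ∀ v, (φ.sat G g v ↔ φ.sat G g' v)
  | .prop i, G, g, g', h, v => Iff.rfl
  | .var x, G, g, g', h, v => by
      show g x = some v ↔ g' x = some v
      rw [h x rfl]
  | .top, G, g, g', h, v => Iff.rfl
  | .and φ ψ, G, g, g', h, v => by
      show _ ∧ _ ↔ _ ∧ _
      exact and_congr
        (sat_free φ g g' (fun x hx => h x (Set.mem_union_left _ hx)) v)
        (sat_free ψ g g' (fun x hx => h x (Set.mem_union_right _ hx)) v)
  | .not φ, G, g, g', h, v => not_congr (sat_free φ g g' h v)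
  | .dia m φ, G, g, g', h, v => by
      show m ≤ Nat.card _ ↔ m ≤ Nat.card _
      have : {u : G.V // G.adj v u ∧ φ.sat G g u} = {u : G.V // G.adj v u ∧ φ.sat G g' u} := by
        congr 1
        funext u
        exact propext (and_congr_right fun _ => sat_free φ g g' h u)
      rw [this]
  | .bind x φ, G, g, g', h, v => by
      show φ.sat G (Function.update g x (some v)) v ↔ φ.sat G (Function.update g' x (some v)) v
      refine sat_free φ _ _ (fun y hy => ?_) v
      by_cases hxy : y = x
      · subst hxy; rw [Function.update_self, Function.update_self]
      · rw [Function.update_of_ne hxy, Function.update_of_ne hxy]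
        exact h y ⟨hy, hxy⟩

/-- Finite conjunctions. -/
def bigAnd {p : ℕ} : List (GMLd p) → GMLd p
  | [] => .top
  | (φ :: l) => .and φ (bigAnd l)

theorem bigAnd_sat {p : ℕ} (G : LabGraph p) (g : ℕ → Option G.V) (v : G.V) :
    ∀ (l : List (GMLd p)), ((bigAnd l).sat G g v ↔ ∀ φ ∈ l, φ.sat G g v)
  | [] => by simp [bigAnd]; trivial
  | (φ :: l) => by
      show (_ ∧ _) ↔ _
      rw [bigAnd_sat G g v l]
      simp

theorem bigAnd_free {p : ℕ} (S : Set ℕ) :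
    ∀ (l : List (GMLd p)), (∀ φ ∈ l, φ.free ⊆ S) → (bigAnd l).free ⊆ S
  | [], _ => by intro x hx; exact absurd hx (by simp [bigAnd, GMLd.free])
  | (φ :: l), h => by
      intro x hx
      rcases hx with hx | hx
      · exact h φ (by simp) hx
      · exact bigAnd_free S l (fun ψ hψ => h ψ (by simp [hψ])) hx

theorem bigAnd_bd {p : ℕ} (d : ℕ) :
    ∀ (l : List (GMLd p)), (∀ φ ∈ l, φ.bindDepth ≤ d) → (bigAnd l).bindDepth ≤ d
  | [], _ => Nat.zero_le d
  | (φ :: l), h => by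
      show max _ _ ≤ d
      exact max_le (h φ (by simp)) (bigAnd_bd d l (fun ψ hψ => h ψ (by simp [hψ])))

/-! #### Contexts of marked nodes -/

/-- `Ctx p j` : labels together with `j` markings. -/
def Ctx (p : ℕ) : ℕ → Type
  | 0 => Fin p → Prop
  | (j+1) => Ctx p j × Prop

instance ctxCountable (p : ℕ) : ∀ j, Countable (Ctx p j)
  | 0 => by unfold Ctx; infer_instance
  | (j+1) => by haveI := ctxCountable p j; unfold Ctx; infer_instance

def readLab {p : ℕ} : ∀ j, Ctx p j → (Fin p → Prop)
  | 0 => id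
  | (j+1) => fun t => readLab j t.1

noncomputable def readMark {p : ℕ} (i : ℕ) : ∀ j, Ctx p j → Prop
  | 0 => fun _ => False
  | (j+1) => fun t => if i = j then t.2 else readMark i j t.1

/-- Compatibility of a context colouring with an assignment, via a map `ν` from
variable names to marking positions. -/
noncomputable def Compat {p : ℕ} (G : LabGraph p) (j : ℕ) (γ : G.V → Ctx p j)
    (g : ℕ → Option G.V) (ν : ℕ → Option ℕ) : Prop :=
  (∀ u, readLab j (γ u) = fun i => G.lab u i) ∧
  (∀ x, (ν x).elim (g x = none)
    (fun i => i < j ∧ ∃ w, g x = some w ∧ ∀ u, readMark i j (γ u) ↔ u = w))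

theorem Compat.ext1 {p : ℕ} {G : LabGraph p} {j : ℕ} {γ : G.V → Ctx p j}
    {g : ℕ → Option G.V} {ν : ℕ → Option ℕ} (h : Compat G j γ g ν) (x : ℕ) (v : G.V) :
    Compat G (j+1) (fun u => ((γ u, u = v) : Ctx p (j+1)))
      (Function.update g x (some v)) (Function.update ν x (some j)) := by
  constructor
  · intro u
    show readLab j (γ u) = _
    exact h.1 u
  · intro y
    by_cases hxy : y = x
    · subst hxy
      rw [Function.update_self, Function.update_self]
      refine ⟨Nat.lt_succ_self j, v, rfl, fun u => ?_⟩
      show (if j = j then (u = v) else readMark j j (γ u)) ↔ u = v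
      rw [if_pos rfl]
    · rw [Function.update_of_ne hxy, Function.update_of_ne hxy]
      cases hν : ν y with
      | none =>
          have := h.2 y
          rw [hν] at this
          exact this
      | some i =>
          have hi := h.2 y
          rw [hν] at hi
          obtain ⟨hij, w, hgw, hm⟩ := hi
          refine ⟨Nat.lt_succ_of_lt hij, w, hgw, fun u => ?_⟩
          show (if i = j then (u = v) else readMark i j (γ u)) ↔ u = w
          rw [if_neg (Nat.ne_of_lt hij)]
          exact hm u

/-- The standard position map: variable `x` is marking `x`, for `x < j`. -/
noncomputable def νid (j : ℕ) : ℕ → Option ℕ := fun x => if x < j then some x else none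

theorem nuid_succ (j : ℕ) : Function.update (νid j) j (some j) = νid (j+1) := by
  funext x
  by_cases hx : x = j
  · subst hx
    rw [Function.update_self]
    unfold νid
    rw [if_pos (Nat.lt_succ_self x)]
  · rw [Function.update_of_ne hx]
    unfold νid
    by_cases h1 : x < j
    · rw [if_pos h1, if_pos (by omega)]
    · rw [if_neg h1, if_neg (by omega)]

theorem Compat.restrict {p : ℕ} {G : LabGraph p} {j : ℕ} {γ : G.V → Ctx p (j+1)}
    {g : ℕ → Option G.V} (h : Compat G (j+1) γ g (νid (j+1))) :
    Compat G j (fun u => (γ u).1) (Function.update g j none) (νid j) := by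
  constructor
  · intro u
    exact h.1 u
  · intro x
    unfold νid
    by_cases h1 : x < j
    · rw [if_pos h1]
      have hx := h.2 x
      unfold νid at hx
      rw [if_pos (by omega : x < j + 1)] at hx
      obtain ⟨_, w, hgw, hm⟩ := hx
      refine ⟨h1, w, ?_, fun u => ?_⟩
      · rw [Function.update_of_ne (by omega : x ≠ j)]
        exact hgw
      · have := hm u
        show readMark x j (γ u).1 ↔ u = w
        rw [show readMark x (j+1) (γ u) = if x = j then (γ u).2 else readMark x j (γ u).1
          from rfl] at this
        rw [if_neg (by omega : x ≠ j)] at this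
        exact this
    · rw [if_neg h1]
      show Function.update g j none x = none
      by_cases h2 : x = j
      · subst h2; rw [Function.update_self]
      · rw [Function.update_of_ne h2]
        have hx := h.2 x
        unfold νid at hx
        rw [if_neg (by omega : ¬ x < j + 1)] at hx
        exact hx

/-- Characteristic formulas of contexts. -/
noncomputable def ctxChar {p : ℕ} : ∀ j, Ctx p j → GMLd p
  | 0 => fun t => bigAnd ((List.finRange p).map
      (fun i => if t i then GMLd.prop i else .not (.prop i)))
  | (j+1) => fun t => .and (ctxChar j t.1) (if t.2 then .var j else .not (.var j))

theorem ctxChar_free {p : ℕ} : ∀ j (t : Ctx p j), (ctxChar j t).free ⊆ Set.Iio j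
  | 0, t => by
      apply bigAnd_free
      intro φ hφ
      simp only [List.mem_map] at hφ
      obtain ⟨i, _, rfl⟩ := hφ
      by_cases hti : t i <;> simp [hti, GMLd.free]
  | (j+1), t => by
      intro x hx
      rcases hx with hx | hx
      · exact Nat.lt_succ_of_lt (ctxChar_free j t.1 hx)
      · by_cases ht2 : t.2
        · rw [if_pos ht2] at hx
          rcases hx with rfl
          exact Nat.lt_succ_self x
        · rw [if_neg ht2] at hx
          rcases hx with rfl
          exact Nat.lt_succ_self x

theorem ctxChar_bd {p : ℕ} : ∀ j (t : Ctx p j), (ctxChar j t).bindDepth ≤ 0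
  | 0, t => by
      apply bigAnd_bd
      intro φ hφ
      simp only [List.mem_map] at hφ
      obtain ⟨i, _, rfl⟩ := hφ
      by_cases hti : t i <;> simp [hti, GMLd.bindDepth]
  | (j+1), t => by
      apply max_le (ctxChar_bd j t.1)
      by_cases ht2 : t.2 <;> simp [ht2, GMLd.bindDepth]

theorem ctxChar_sat {p : ℕ} : ∀ j (t : Ctx p j) (G : LabGraph p) (γ : G.V → Ctx p j)
    (g : ℕ → Option G.V) (v : G.V), Compat G j γ g (νid j) →
    ((ctxChar j t).sat G g v ↔ γ v = t)
  | 0, t, G, γ, g, v, h => by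
      show (bigAnd ((List.finRange p).map
        (fun i => if t i then GMLd.prop i else .not (.prop i)))).sat G g v ↔ γ v = t
      rw [bigAnd_sat]
      have hlab : ∀ i : Fin p, (γ v) i = G.lab v i := fun i => congrFun (h.1 v) i
      constructor
      · intro hall
        funext i
        have := hall _ (List.mem_map.2 ⟨i, List.mem_finRange i, rfl⟩)
        by_cases hti : t i
        · rw [if_pos hti] at this
          have : G.lab v i := this
          rw [hlab i]
          exact propext ⟨fun _ => hti, fun _ => this⟩
        · rw [if_neg hti] at this
          have : ¬ G.lab v i := this
          rw [hlab i]
          exact propext ⟨fun hl => absurd hl this, fun ht => absurd ht hti⟩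
      · intro heq φ hφ
        simp only [List.mem_map] at hφ
        obtain ⟨i, _, rfl⟩ := hφ
        have hti' : t i = G.lab v i := by rw [← heq]; exact hlab i
        by_cases hti : t i
        · rw [if_pos hti]
          show G.lab v i
          rw [← hti']; exact hti
        · rw [if_neg hti]
          show ¬ G.lab v i
          rw [← hti']; exact hti
  | (j+1), t, G, γ, g, v, h => by
      have hres := Compat.restrict h
      have hmk := h.2 j
      unfold νid at hmk
      rw [if_pos (Nat.lt_succ_self j)] at hmk
      obtain ⟨_, w, hgw, hm⟩ := hmk
      have hmv : ∀ u, (γ u).2 ↔ u = w := by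
        intro u
        have := hm u
        rw [show readMark j (j+1) (γ u) = if j = j then (γ u).2 else readMark j j (γ u).1
          from rfl, if_pos rfl] at this
        exact this
      show ((ctxChar j t.1).sat G g v ∧ _) ↔ _
      have h1 : (ctxChar j t.1).sat G g v ↔ (γ v).1 = t.1 := by
        rw [sat_free (ctxChar j t.1) g (Function.update g j none)
          (fun y hy => (Function.update_of_ne (Nat.ne_of_lt (ctxChar_free j t.1 hy)) _ g).symm) v]
        exact ctxChar_sat j t.1 G (fun u => (γ u).1) (Function.update g j none) v hres
      have h2 : (if t.2 then GMLd.var j else .not (.var j)).sat G g v ↔ ((γ v).2 ↔ t.2) := by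
        have hvj : (GMLd.var j).sat G g v ↔ (γ v).2 := by
          show g j = some v ↔ _
          rw [hgw, hmv v]
          exact ⟨fun h' => (Option.some_inj.1 h').symm, fun h' => by rw [h']⟩
        by_cases ht2 : t.2
        · rw [if_pos ht2]
          rw [hvj]
          exact ⟨fun h' => ⟨fun _ => ht2, fun _ => h'⟩, fun h' => h'.2 ht2⟩
        · rw [if_neg ht2]
          show ¬ (GMLd.var j).sat G g v ↔ _
          rw [hvj]
          exact ⟨fun h' => ⟨fun hh => absurd hh h', fun hh => absurd hh ht2⟩,
            fun h' hh => ht2 (h'.1 hh)⟩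
      rw [h1, h2]
      constructor
      · rintro ⟨ha, hb⟩
        exact Prod.ext ha (propext hb)
      · intro heq
        constructor
        · exact congrArg Prod.fst heq
        · rw [show (γ v).2 = t.2 from congrArg Prod.snd heq]

end LogicBasics
section CharFormulas
open Classical

/-- Characteristic formulas for refinement colours, given characteristic
formulas for the initial colours. -/
theorem rchar {p : ℕ} (τ : Type)
    (Good : (G : LabGraph p) → (G.V → τ) → (ℕ → Option G.V) → Prop)
    (β : τ → GMLd p) (F : Set ℕ) (d : ℕ)
    (hfree : ∀ t, (β t).free ⊆ F) (hbd : ∀ t, (β t).bindDepth ≤ d)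
    (hβ : ∀ (t : τ) (G : LabGraph p) (γ : G.V → τ) (g : ℕ → Option G.V) (v : G.V),
      Good G γ g → ((β t).sat G g v ↔ γ v = t)) :
    ∀ (k : ℕ) (c : Iter τ k), ∃ χ : GMLd p, χ.free ⊆ F ∧ χ.bindDepth ≤ d ∧
      ∀ (G : LabGraph p) (γ : G.V → τ) (g : ℕ → Option G.V) (v : G.V), Good G γ g →
        (χ.sat G g v ↔ rcol G γ k v = c) := by
  intro k
  induction k with
  | zero => exact fun c => ⟨β c, hfree c, hbd c, fun G γ g v hG => hβ c G γ g v hG⟩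
  | succ k ih =>
      rintro ⟨c₀, M⟩
      choose χf hχfree hχbd hχsat using ih
      set L : List (GMLd p) := M.toFinset.toList.map
        (fun t => GMLd.and (.dia (M.count t) (χf t)) (.not (.dia (M.count t + 1) (χf t)))) with hL
      refine ⟨.and (χf c₀) (.and (.not (.dia (Multiset.card M + 1) .top)) (bigAnd L)), ?_, ?_, ?_⟩
      · intro x hx
        rcases hx with hx | hx
        · exact hχfree c₀ hx
        · rcases hx with hx | hx
          · exact absurd hx (by simp [GMLd.free])
          · refine bigAnd_free F L ?_ hx
            intro φ hφ
            simp only [hL, List.mem_map] at hφ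
            obtain ⟨t, _, rfl⟩ := hφ
            intro y hy
            rcases hy with hy | hy <;> exact hχfree t hy
      · refine max_le (hχbd c₀) (max_le ?_ ?_)
        · show (GMLd.top (p := p)).bindDepth ≤ d
          exact Nat.zero_le d
        · refine bigAnd_bd d L ?_
          intro φ hφ
          simp only [hL, List.mem_map] at hφ
          obtain ⟨t, _, rfl⟩ := hφ
          exact max_le (hχbd t) (hχbd t)
      · intro G γ g v hG
        set N : Multiset (Iter τ k) := (G.nbrFinset v).val.map (rcol G γ k) with hN
        have hcnt : ∀ t : Iter τ k,
            Nat.card {u : G.V // G.adj v u ∧ (χf t).sat G g u} = N.count t := by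
          intro t
          rw [natCard_adj, hN, Multiset.count_map]
          congr 1
          refine Multiset.filter_congr (fun u _ => ?_)
          rw [hχsat t G γ g u hG]
          exact eq_comm
        have hcard : Nat.card {u : G.V // G.adj v u ∧ (GMLd.top (p := p)).sat G g u}
            = Multiset.card N := by
          rw [natCard_adj, hN, Multiset.card_map]
          congr 1
          exact Multiset.filter_eq_self.2 (fun u _ => trivial)
        show ((χf c₀).sat G g v ∧ (¬ (Multiset.card M + 1 ≤ Nat.card _)) ∧ _) ↔ _
        rw [hχsat c₀ G γ g v hG, hcard, bigAnd_sat]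
        have hsplit : (∀ φ ∈ L, φ.sat G g v) ↔
            ∀ t ∈ M.toFinset, M.count t ≤ N.count t ∧ N.count t < M.count t + 1 := by
          constructor
          · intro hall t ht
            have := hall _ (List.mem_map.2 ⟨t, Finset.mem_toList.2 ht, rfl⟩)
            obtain ⟨h1, h2⟩ := this
            have h1' : M.count t ≤ Nat.card {u : G.V // G.adj v u ∧ (χf t).sat G g u} := h1
            have h2' : ¬ (M.count t + 1 ≤ Nat.card {u : G.V // G.adj v u ∧ (χf t).sat G g u}) := h2
            rw [hcnt t] at h1' h2'
            exact ⟨h1', by omega⟩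
          · intro hall φ hφ
            simp only [hL, List.mem_map] at hφ
            obtain ⟨t, ht, rfl⟩ := hφ
            rw [Finset.mem_toList] at ht
            obtain ⟨h1, h2⟩ := hall t ht
            constructor
            · show M.count t ≤ Nat.card _
              rw [hcnt t]; exact h1
            · show ¬ (M.count t + 1 ≤ Nat.card _)
              rw [hcnt t]; omega
        rw [hsplit]
        have hrc : rcol G γ (k+1) v = (rcol G γ k v, N) := rfl
        erw [hrc, Prod.mk.injEq]
        constructor
        · rintro ⟨h1, h2, h3⟩
          refine ⟨h1, ?_⟩
          have hle : M ≤ N := by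
            rw [Multiset.le_iff_count]
            intro t
            by_cases ht : t ∈ M
            · exact (h3 t (Multiset.mem_toFinset.2 ht)).1
            · rw [Multiset.count_eq_zero_of_notMem ht]
              exact Nat.zero_le _
          have hcard' : Multiset.card N ≤ Multiset.card M := by omega
          exact (Multiset.eq_of_le_of_card_le hle hcard').symm
        · rintro ⟨h1, h2⟩
          subst h2
          exact ⟨h1, by omega, fun t _ => ⟨le_refl _, Nat.lt_succ_self _⟩⟩

/-- Characteristic formulas for hierarchical colours. -/
theorem char_formula {p : ℕ} : ∀ (d j k : ℕ) (c : ghT d (Ctx p j) k),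
    ∃ χ : GMLd p, χ.free ⊆ Set.Iio j ∧ χ.bindDepth ≤ d ∧
      ∀ (G : LabGraph p) (γ : G.V → Ctx p j) (g : ℕ → Option G.V) (v : G.V),
        Compat G j γ g (νid j) → (χ.sat G g v ↔ ghcol d k G γ v = c)
  | 0, j, k, c => by
      obtain ⟨χ, h1, h2, h3⟩ := rchar (Ctx p j)
        (fun G γ g => Compat G j γ g (νid j)) (ctxChar j) (Set.Iio j) 0
        (ctxChar_free j) (ctxChar_bd j) (fun t G γ g v h => ctxChar_sat j t G γ g v h) k c
      exact ⟨χ, h1, h2, h3⟩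
  | (d+1), j, k, c => by
      have IH := char_formula (p := p) d (j+1) k
      choose ψf hψfree hψbd hψsat using IH
      have hfree' : ∀ t : Ctx p j × ghT d (Ctx p (j+1)) k,
          (GMLd.and (ctxChar j t.1) (.bind j (ψf t.2))).free ⊆ Set.Iio j := by
        intro t x hx
        rcases hx with hx | hx
        · exact ctxChar_free j t.1 hx
        · rcases hx with ⟨hx1, hx2⟩
          have := hψfree t.2 hx1
          rcases Nat.lt_succ_iff_lt_or_eq.1 this with h | h
          · exact h
          · exact absurd h hx2
      have hbd' : ∀ t : Ctx p j × ghT d (Ctx p (j+1)) k,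
          (GMLd.and (ctxChar j t.1) (.bind j (ψf t.2))).bindDepth ≤ d + 1 := by
        intro t
        exact max_le ((ctxChar_bd j t.1).trans (Nat.zero_le _))
          (Nat.succ_le_succ (hψbd t.2))
      have hβ' : ∀ (t : Ctx p j × ghT d (Ctx p (j+1)) k) (G : LabGraph p)
          (γ2 : G.V → Ctx p j × ghT d (Ctx p (j+1)) k) (g : ℕ → Option G.V) (v : G.V),
          (∃ γ : G.V → Ctx p j, Compat G j γ g (νid j) ∧
            γ2 = fun u => (γ u, ghcol d k G (fun w => ((γ w, w = u) : Ctx p (j+1))) u)) →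
          ((GMLd.and (ctxChar j t.1) (.bind j (ψf t.2))).sat G g v ↔ γ2 v = t) := by
        rintro t G γ2 g v ⟨γ, hc, rfl⟩
        show ((ctxChar j t.1).sat G g v ∧ (ψf t.2).sat G (Function.update g j (some v)) v) ↔ _
        rw [ctxChar_sat j t.1 G γ g v hc]
        have hext : Compat G (j+1) (fun u => ((γ u, u = v) : Ctx p (j+1)))
            (Function.update g j (some v)) (νid (j+1)) := by
          rw [← nuid_succ j]
          exact Compat.ext1 hc j v
        rw [hψsat t.2 G (fun u => ((γ u, u = v) : Ctx p (j+1)))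
          (Function.update g j (some v)) v hext]
        exact ⟨fun h => Prod.ext h.1 h.2,
          fun h => ⟨congrArg Prod.fst h, congrArg Prod.snd h⟩⟩
      obtain ⟨χ, h1, h2, h3⟩ := rchar (Ctx p j × ghT d (Ctx p (j+1)) k)
        (fun G γ2 g => ∃ γ : G.V → Ctx p j, Compat G j γ g (νid j) ∧
          γ2 = fun u => (γ u, ghcol d k G (fun w => ((γ w, w = u) : Ctx p (j+1))) u))
        (fun t => .and (ctxChar j t.1) (.bind j (ψf t.2))) (Set.Iio j) (d+1)
        hfree' hbd' hβ' k c
      refine ⟨χ, h1, h2, ?_⟩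
      intro G γ g v hc
      exact h3 G (fun u => (γ u, ghcol d k G (fun w => ((γ w, w = u) : Ctx p (j+1))) u))
        g v ⟨γ, hc, rfl⟩
section GMLSound
open Classical

theorem card_filter_map {α β : Type} (f : α → β) (P : β → Prop) (s : Multiset α) :
    Multiset.card (s.filter (fun a => P (f a))) = Multiset.card ((s.map f).filter P) := by
  classical
  rw [Multiset.filter_map, Multiset.card_map]
  exact congrArg Multiset.card (Multiset.filter_congr (fun a _ => Iff.rfl))

/-- Truth of a formula of binder depth at most `d` only depends on the
hierarchical colours of depth `d`. -/
theorem gml_sound {p : ℕ} : ∀ (φ : GMLd p) (d : ℕ), φ.bindDepth ≤ d →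
    ∀ (G G' : LabGraph p) (j : ℕ) (γ : G.V → Ctx p j) (γ' : G'.V → Ctx p j)
      (g : ℕ → Option G.V) (g' : ℕ → Option G'.V) (ν : ℕ → Option ℕ),
      Compat G j γ g ν → Compat G' j γ' g' ν →
      ∀ (v : G.V) (v' : G'.V),
      (∀ k, ghcol d k G γ v = ghcol d k G' γ' v') →
      (φ.sat G g v ↔ φ.sat G' g' v')
  | .prop i, d, hbd, G, G', j, γ, γ', g, g', ν, hc, hc', v, v', h => by
      obtain ⟨r, hr⟩ := ghcol_read d (Ctx p j) 0
      have hγ : γ v = γ' v' := by rw [← hr G γ v, ← hr G' γ' v', h 0]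
      show G.lab v i ↔ G'.lab v' i
      rw [← congrFun (hc.1 v) i, ← congrFun (hc'.1 v') i, hγ]
  | .var x, d, hbd, G, G', j, γ, γ', g, g', ν, hc, hc', v, v', h => by
      have hx := hc.2 x
      have hx' := hc'.2 x
      obtain ⟨r, hr⟩ := ghcol_read d (Ctx p j) 0
      have hγ : γ v = γ' v' := by rw [← hr G γ v, ← hr G' γ' v', h 0]
      show g x = some v ↔ g' x = some v'
      cases hν : ν x with
      | none =>
          rw [hν] at hx hx'
          simp only [Option.elim] at hx hx'
          rw [hx, hx']
          simp
      | some i =>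
          rw [hν] at hx hx'
          simp only [Option.elim] at hx hx'
          obtain ⟨hij, w, hgw, hm⟩ := hx
          obtain ⟨_, w', hgw', hm'⟩ := hx'
          rw [hgw, hgw']
          have hiff : (v = w) ↔ (v' = w') := by
            rw [← hm v, ← hm' v', hγ]
          constructor
          · intro hh
            exact congrArg some (hiff.1 (Option.some_inj.1 hh).symm).symm
          · intro hh
            exact congrArg some (hiff.2 (Option.some_inj.1 hh).symm).symm
  | .top, d, hbd, G, G', j, γ, γ', g, g', ν, hc, hc', v, v', h => Iff.rfl
  | .and φ ψ, d, hbd, G, G', j, γ, γ', g, g', ν, hc, hc', v, v', h => by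
      have h1 := gml_sound φ d ((le_max_left _ _).trans hbd) G G' j γ γ' g g' ν hc hc' v v' h
      have h2 := gml_sound ψ d ((le_max_right _ _).trans hbd) G G' j γ γ' g g' ν hc hc' v v' h
      exact and_congr h1 h2
  | .not φ, d, hbd, G, G', j, γ, γ', g, g', ν, hc, hc', v, v', h =>
      not_congr (gml_sound φ d hbd G G' j γ γ' g g' ν hc hc' v v' h)
  | .dia m ψ, d, hbd, G, G', j, γ, γ', g, g', ν, hc, hc', v, v', h => by
      have hψbd : ψ.bindDepth ≤ d := hbd
      set cw : (k : ℕ) → (G.V ⊕ G'.V) → ghT d (Ctx p j) k :=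
        fun k => Sum.elim (ghcol d k G γ) (ghcol d k G' γ') with hcw
      have hdet : ∀ k1 k2, k1 ≤ k2 → ∃ π : ghT d (Ctx p j) k2 → ghT d (Ctx p j) k1,
          ∀ w, cw k1 w = π (cw k2 w) := by
        intro k1 k2 hk
        obtain ⟨π, hπ⟩ := ghcol_det d (Ctx p j) k1 k2 hk
        refine ⟨π, fun w => ?_⟩
        cases w with
        | inl u => exact hπ G γ u
        | inr u => exact hπ G' γ' u
      set R : ℕ → Finset ((G.V ⊕ G'.V) × (G.V ⊕ G'.V)) :=
        fun k => Finset.univ.filter (fun z => cw k z.1 = cw k z.2) with hR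
      have hanti : ∀ k1 k2, k1 ≤ k2 → R k2 ⊆ R k1 := by
        intro k1 k2 hk z hz
        obtain ⟨π, hπ⟩ := hdet k1 k2 hk
        rw [hR] at hz ⊢
        rw [Finset.mem_filter] at hz ⊢
        exact ⟨Finset.mem_univ _, by rw [hπ z.1, hπ z.2, hz.2]⟩
      obtain ⟨K, hK⟩ : ∃ K, (R K).card = sInf (Set.range fun k => (R k).card) :=
        Nat.sInf_mem (Set.range_nonempty _)
      have hstab : ∀ (a b : G.V ⊕ G'.V), cw K a = cw K b → ∀ k, cw k a = cw k b := by
        intro a b hab k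
        rcases le_total k K with hk | hk
        · obtain ⟨π, hπ⟩ := hdet k K hk
          rw [hπ a, hπ b, hab]
        · have hsub : R k ⊆ R K := hanti K k hk
          have hcard : (R K).card ≤ (R k).card := by
            rw [hK]; exact Nat.sInf_le ⟨k, rfl⟩
          have heq : R k = R K := Finset.eq_of_subset_of_card_le hsub hcard
          have hmem : (a, b) ∈ R K := by
            rw [hR, Finset.mem_filter]; exact ⟨Finset.mem_univ _, hab⟩
          rw [← heq, hR, Finset.mem_filter] at hmem
          exact hmem.2
      set SP : ghT d (Ctx p j) K → Prop := fun t => ∃ w : G.V ⊕ G'.V,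
        cw K w = t ∧ Sum.elim (ψ.sat G g) (ψ.sat G' g') w with hSP
      have claim : ∀ u : G.V, (SP (cw K (Sum.inl u)) ↔ ψ.sat G g u) := by
        intro u
        constructor
        · rintro ⟨w, hw, hs⟩
          cases w with
          | inl u₀ =>
              exact (gml_sound ψ d hψbd G G j γ γ g g ν hc hc u u₀
                (fun k => (hstab _ _ hw k).symm)).2 hs
          | inr u₀ =>
              exact (gml_sound ψ d hψbd G G' j γ γ' g g' ν hc hc' u u₀
                (fun k => (hstab _ _ hw k).symm)).2 hs
        · intro hs
          exact ⟨Sum.inl u, rfl, hs⟩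
      have claim' : ∀ u' : G'.V, (SP (cw K (Sum.inr u')) ↔ ψ.sat G' g' u') := by
        intro u'
        constructor
        · rintro ⟨w, hw, hs⟩
          cases w with
          | inl u₀ =>
              exact (gml_sound ψ d hψbd G G' j γ γ' g g' ν hc hc' u₀ u'
                (fun k => hstab _ _ hw k)).1 hs
          | inr u₀ =>
              exact (gml_sound ψ d hψbd G' G' j γ' γ' g' g' ν hc' hc' u' u₀
                (fun k => (hstab _ _ hw k).symm)).2 hs
        · intro hs
          exact ⟨Sum.inr u', rfl, hs⟩
      obtain ⟨Fn, hFn⟩ := ghcol_nbr d (Ctx p j) K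
      have hmul : ((G.nbrFinset v).val.map (fun u => ghcol d K G γ u))
          = ((G'.nbrFinset v').val.map (fun u => ghcol d K G' γ' u)) := by
        rw [← hFn G γ v, ← hFn G' γ' v', h (K+1)]
      have hcount : Nat.card {u : G.V // G.adj v u ∧ ψ.sat G g u}
          = Nat.card {u : G'.V // G'.adj v' u ∧ ψ.sat G' g' u} := by
        rw [natCard_adj, natCard_adj]
        have e1 : @Multiset.filter G.V (fun u => ψ.sat G g u)
              (fun u => propDecidable _) (G.nbrFinset v).val
            = @Multiset.filter G.V (fun u => SP (ghcol d K G γ u))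
              (fun u => propDecidable _) (G.nbrFinset v).val :=
          @Multiset.filter_congr G.V (fun u => ψ.sat G g u)
            (fun u => SP (ghcol d K G γ u)) (fun u => propDecidable _)
            (fun u => propDecidable _) (G.nbrFinset v).val (fun u _ => (claim u).symm)
        have e1' : @Multiset.filter G'.V (fun u => ψ.sat G' g' u)
              (fun u => propDecidable _) (G'.nbrFinset v').val
            = @Multiset.filter G'.V (fun u => SP (ghcol d K G' γ' u))
              (fun u => propDecidable _) (G'.nbrFinset v').val :=
          @Multiset.filter_congr G'.V (fun u => ψ.sat G' g' u)
            (fun u => SP (ghcol d K G' γ' u)) (fun u => propDecidable _)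
            (fun u => propDecidable _) (G'.nbrFinset v').val (fun u _ => (claim' u).symm)
        rw [e1, e1']
        exact (card_filter_map (fun u => ghcol d K G γ u) SP (G.nbrFinset v).val).trans
          ((congrArg (fun M => Multiset.card
              (@Multiset.filter _ SP (fun a => propDecidable (SP a)) M)) hmul).trans
            (card_filter_map (fun u => ghcol d K G' γ' u) SP (G'.nbrFinset v').val).symm)
      show m ≤ Nat.card _ ↔ m ≤ Nat.card _
      rw [hcount]
  | .bind x ψ, d, hbd, G, G', j, γ, γ', g, g', ν, hc, hc', v, v', h => by
      have hψ : ψ.bindDepth + 1 ≤ d := hbd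
      cases d with
      | zero => omega
      | succ d' =>
          have hψbd : ψ.bindDepth ≤ d' := Nat.succ_le_succ_iff.1 hψ
          show ψ.sat G (Function.update g x (some v)) v ↔
            ψ.sat G' (Function.update g' x (some v')) v'
          refine gml_sound ψ d' hψbd G G' (j+1)
            (fun u => ((γ u, u = v) : Ctx p (j+1))) (fun u => ((γ' u, u = v') : Ctx p (j+1)))
            _ _ (Function.update ν x (some j)) (Compat.ext1 hc x v) (Compat.ext1 hc' x v') v v' ?_
          intro k
          obtain ⟨r, hr⟩ := ghcol_read_inner d' (Ctx p j) k
          calc ghcol d' k G (fun u => ((γ u, u = v) : Ctx p (j+1))) v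
              = r (ghcol (d'+1) k G γ v) := (hr G γ v).symm
            _ = r (ghcol (d'+1) k G' γ' v') := by rw [h k]
            _ = ghcol d' k G' (fun u => ((γ' u, u = v') : Ctx p (j+1))) v' := hr G' γ' v'

end GMLSound
section Assembly
open Classical

theorem compat0 {p : ℕ} (G : LabGraph p) :
    Compat G 0 (fun u (i : Fin p) => G.lab u i) (fun _ => none) (νid 0) := by
  refine ⟨fun u => rfl, fun x => ?_⟩
  unfold νid
  rw [if_neg (Nat.not_lt_zero x)]
  exact rfl

theorem hegnn_sep_iff_gml (p d : ℕ) (G G' : LabGraph p) (v : G.V) (v' : G'.V) :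
    (∀ A : HEGNN d p 1, (A.clsP G v ↔ A.clsP G' v')) ↔
    (∀ φ : GMLd p, φ.Sentence → φ.bindDepth ≤ d → (φ.satS G v ↔ φ.satS G' v')) := by
  constructor
  · intro hA φ hs hbd
    have hcols : ∀ k, ghcol d k G (fun u (i : Fin p) => G.lab u i) v
        = ghcol d k G' (fun u (i : Fin p) => G'.lab u i) v' := by
      intro k
      obtain ⟨A, hA'⟩ := hcol_classifier p d k (ghcol d k G (fun u (i : Fin p) => G.lab u i) v)
      have h1 : A.clsP G v := (hA' G v).2 rfl
      exact ((hA' G' v').1 ((hA A).1 h1)).symm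
    exact gml_sound φ d hbd G G' 0 (fun u (i : Fin p) => G.lab u i)
      (fun u (i : Fin p) => G'.lab u i) (fun _ => none) (fun _ => none) (fun _ => none)
      ⟨fun u => rfl, fun x => rfl⟩ ⟨fun u => rfl, fun x => rfl⟩ v v' hcols
  · intro hφ A
    have hcols : ∀ k, ghcol d k G (fun u (i : Fin p) => G.lab u i) v
        = ghcol d k G' (fun u (i : Fin p) => G'.lab u i) v' := by
      intro k
      obtain ⟨χ, hfree, hbd, hsat⟩ := char_formula (p := p) d 0 k
        (ghcol d k G (fun u (i : Fin p) => G.lab u i) v)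
      have hsent : χ.Sentence :=
        Set.eq_empty_iff_forall_notMem.2 (fun x hx => Nat.not_lt_zero x (hfree hx))
      have h1 : χ.satS G v := (hsat G _ (fun _ => none) v (compat0 G)).2 rfl
      have h2 : χ.satS G' v' := (hφ χ hsent hbd).1 h1
      exact ((hsat G' _ (fun _ => none) v' (compat0 G')).1 h2).symm
    obtain ⟨k, f, hf⟩ := hegnn_sound A (Fin p → Prop) multihot
    unfold HEGNN.clsP
    rw [embG_eq_multihot G, embG_eq_multihot G',
      hf G (fun u (i : Fin p) => G.lab u i) v, hf G' (fun u (i : Fin p) => G'.lab u i) v',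
      hcols k]

end Assembly

/-- For every `d ≥ 0`, ρ(HE-GNN-(d)) = ρ(GML(↓^d)); consequently
(taking the union over all `d`), ρ(HE-GNN) = ρ(GML(↓)): two pointed graphs agree on
all nesting-depth-`d` HE-GNN node classifiers iff they satisfy exactly the same
GML(↓) sentences of ↓-nesting-depth at most `d`. -/
theorem hegnn_separation_eq_gml_bind (p : ℕ) :
    (∀ (d : ℕ) (G G' : LabGraph p) (v : G.V) (v' : G'.V),
      (∀ A : HEGNN d p 1, (A.clsP G v ↔ A.clsP G' v')) ↔
      (∀ φ : GMLd p, φ.Sentence → φ.bindDepth ≤ d → (φ.satS G v ↔ φ.satS G' v'))) ∧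
    (∀ (G G' : LabGraph p) (v : G.V) (v' : G'.V),
      (∀ (d : ℕ) (A : HEGNN d p 1), (A.clsP G v ↔ A.clsP G' v')) ↔
      (∀ φ : GMLd p, φ.Sentence → (φ.satS G v ↔ φ.satS G' v'))) := by
  refine ⟨fun d G G' v v' => hegnn_sep_iff_gml p d G G' v v', fun G G' v v' => ?_⟩
  constructor
  · intro hA φ hs
    exact (hegnn_sep_iff_gml p φ.bindDepth G G' v v').1 (hA φ.bindDepth) φ hs (le_refl _)
  · intro hφ d A
    exact (hegnn_sep_iff_gml p d G G' v v').2 (fun ψ hs _ => hφ ψ hs) A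
end CharFormulas
end

section
/- For all graphs G, G': G is distinguished from G' by WL-IR with zero individualization steps (i.e., G ≢_{WL-IR-0} G') if and only if G is distinguished from G' at the graph level by some GNN node classifier (i.e., G ≢_{GNN} G'). -/
open Classical

/-! ### Auxiliary lemmas -/

section Aux

lemma mapTrans {α β γ δ : Type*} {M : Multiset α} {M' : Multiset β} {f : α → γ} {g : β → γ}
    {f' : α → δ} {g' : β → δ} (h : M.map f = M'.map g)
    (hfg : ∀ a ∈ M, ∀ b ∈ M', f a = g b → f' a = g' b) : M.map f' = M'.map g' := by
  rw [← Multiset.rel_eq] at h ⊢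
  rw [Multiset.rel_map] at h ⊢
  exact h.mono hfg

variable {p : ℕ} (H : HashSetup p)

lemma hInit_inj {a b : Fin p → Prop} (h : H.hInit a = H.hInit b) : a = b := by
  have := H.inj (a₁ := Sum.inl a) (a₂ := Sum.inl b) h
  simpa using this

lemma hRefine_inj {a b : H.C} {M M' : Multiset H.C} (h : H.hRefine a M = H.hRefine b M') :
    a = b ∧ M = M' := by
  have := H.inj (a₁ := Sum.inr (Sum.inl (a, M))) (a₂ := Sum.inr (Sum.inl (b, M'))) h
  simpa [Prod.ext_iff] using this

variable (G : LabGraph p)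

lemma wlIter_succ' (d : ℕ) (col : G.V → H.C) :
    wlIter H G (d + 1) col = wlIter H G d (wlStep H G col) := by
  induction d with
  | zero => rfl
  | succ d ih => show wlStep H G (wlIter H G (d+1) col) = _; rw [ih]; rfl

lemma wlIter_one (col : G.V → H.C) : wlIter H G 1 col = wlStep H G col := rfl

lemma leaf_iso {C : Type} (l l' : Multiset C) :
    CTree.Iso (CTree.node l []) (CTree.node l' []) ↔ l = l' := by
  constructor
  · intro h; cases h; rfl
  · rintro rfl; exact CTree.Iso.node (Equiv.refl _) (fun i => i.elim0)

/-- Depth (number of layers) of a GNN. -/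
def GNN.depth : {D D' : ℕ} → GNN D D' → ℕ
  | _, _, .last _ => 1
  | _, _, .cons _ rest => rest.depth + 1

/-- WL colors determine GNN embeddings. -/
lemma gnn_sim {D D' : ℕ} (A : GNN D D') (G₁ G₂ : LabGraph p)
    (c₁ : G₁.V → H.C) (c₂ : G₂.V → H.C)
    (e₁ : G₁.V → Fin D → ℝ) (e₂ : G₂.V → Fin D → ℝ)
    (base : ∀ v w, c₁ v = c₂ w → e₁ v = e₂ w) :
    ∀ v w, wlIter H G₁ A.depth c₁ v = wlIter H G₂ A.depth c₂ w →
      A.run G₁ e₁ v = A.run G₂ e₂ w := by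
  induction A generalizing c₁ c₂ with
  | @last D D' l =>
    intro v w h
    rw [show GNN.depth (.last l) = 1 from rfl, wlIter_one, wlIter_one] at h
    obtain ⟨h1, h2⟩ := hRefine_inj H h
    show l.apply G₁ e₁ v = l.apply G₂ e₂ w
    unfold GNNLayer.apply
    rw [base v w h1, mapTrans h2 (fun a _ b _ hab => base a b hab)]
  | @cons D Dm D' l rest ih =>
    intro v w h
    rw [show GNN.depth (.cons l rest) = rest.depth + 1 from rfl,
      wlIter_succ', wlIter_succ'] at h
    refine ih (wlStep H G₁ c₁) (wlStep H G₂ c₂) _ _ ?_ v w h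
    intro a b hab
    obtain ⟨h1, h2⟩ := hRefine_inj H hab
    unfold GNNLayer.apply
    rw [base a b h1, mapTrans h2 (fun x _ y _ hxy => base x y hxy)]

lemma embG_of_hInit_eq {G₁ G₂ : LabGraph p} {v : G₁.V} {w : G₂.V}
    (h : H.hInit (G₁.lab v) = H.hInit (G₂.lab w)) : G₁.embG v = G₂.embG w := by
  have hl := hInit_inj H h
  funext i
  simp only [LabGraph.embG]
  by_cases hv : G₁.lab v i
  · rw [if_pos hv, if_pos (by rw [← hl]; exact hv)]
  · rw [if_neg hv, if_neg (by rw [← hl]; exact hv)]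

end Aux
section Stab

variable {p : ℕ} (H : HashSetup p) (G G' : LabGraph p)

/-- Joint WL coloring on the disjoint union of the node sets. -/
noncomputable def jointCol (i : ℕ) : G.V ⊕ G'.V → H.C :=
  Sum.elim (wlIter H G i (initCol H G)) (wlIter H G' i (initCol H G'))

/-- Joint neighbour multiset. -/
noncomputable def nbW : G.V ⊕ G'.V → Multiset (G.V ⊕ G'.V) :=
  Sum.elim (fun v => (G.nbrFinset v).val.map Sum.inl)
    (fun v => (G'.nbrFinset v).val.map Sum.inr)

lemma jointCol_succ (i : ℕ) (x : G.V ⊕ G'.V) :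
    jointCol H G G' (i+1) x
      = H.hRefine (jointCol H G G' i x) ((nbW G G' x).map (jointCol H G G' i)) := by
  cases x <;> simp [jointCol, nbW, wlIter, wlStep, Multiset.map_map, Function.comp]

/-- Stability of the joint partition at round `i`. -/
def JStb (i : ℕ) : Prop :=
  ∀ x y, jointCol H G G' i x = jointCol H G G' i y →
    jointCol H G G' (i+1) x = jointCol H G G' (i+1) y

lemma jointCol_ref {i : ℕ} {x y : G.V ⊕ G'.V}
    (h : jointCol H G G' (i+1) x = jointCol H G G' (i+1) y) :
    jointCol H G G' i x = jointCol H G G' i y := by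
  rw [jointCol_succ, jointCol_succ] at h
  exact (hRefine_inj H h).1

lemma jstb_succ {i : ℕ} (hs : JStb H G G' i) : JStb H G G' (i+1) := by
  intro x y h
  have h' := h
  rw [jointCol_succ, jointCol_succ] at h'
  obtain ⟨-, h2⟩ := hRefine_inj H h'
  rw [jointCol_succ H G G' (i+1) x, jointCol_succ H G G' (i+1) y, h,
    mapTrans h2 (fun a _ b _ hab => hs a b hab)]

noncomputable def psiMap (i : ℕ) : H.C → H.C := fun d =>
  if h : ∃ x : G.V ⊕ G'.V, jointCol H G G' (i+1) x = d then jointCol H G G' i h.choose else d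

lemma psiMap_spec (i : ℕ) (x : G.V ⊕ G'.V) :
    psiMap H G G' i (jointCol H G G' (i+1) x) = jointCol H G G' i x := by
  have hx : ∃ y : G.V ⊕ G'.V, jointCol H G G' (i+1) y = jointCol H G G' (i+1) x := ⟨x, rfl⟩
  rw [psiMap, dif_pos hx]
  exact jointCol_ref H G G' hx.choose_spec

lemma psiMap_image (i : ℕ) :
    (Finset.univ.image (jointCol H G G' (i+1))).image (psiMap H G G' i)
      = Finset.univ.image (jointCol H G G' i) := by
  ext c
  simp only [Finset.mem_image, Finset.mem_univ, true_and]
  constructor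
  · rintro ⟨d, ⟨x, rfl⟩, rfl⟩
    exact ⟨x, (psiMap_spec H G G' i x).symm⟩
  · rintro ⟨x, rfl⟩
    exact ⟨jointCol H G G' (i+1) x, ⟨x, rfl⟩, psiMap_spec H G G' i x⟩

lemma jcard_mono (i : ℕ) :
    (Finset.univ.image (jointCol H G G' i)).card
      ≤ (Finset.univ.image (jointCol H G G' (i+1))).card := by
  rw [← psiMap_image H G G' i]
  exact Finset.card_image_le

lemma jstb_of_card_eq {i : ℕ}
    (h : (Finset.univ.image (jointCol H G G' i)).card
      = (Finset.univ.image (jointCol H G G' (i+1))).card) : JStb H G G' i := by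
  have hinj : Set.InjOn (psiMap H G G' i) (Finset.univ.image (jointCol H G G' (i+1))) := by
    apply Finset.injOn_of_card_image_eq
    rw [psiMap_image H G G' i, ← h]
  intro x y hxy
  have := hinj (Finset.mem_image_of_mem _ (Finset.mem_univ x))
    (Finset.mem_image_of_mem _ (Finset.mem_univ y))
    (by rw [psiMap_spec, psiMap_spec, hxy])
  exact this

lemma joint_image_eq (i : ℕ)
    (h : colMultiset H G (wlIter H G i (initCol H G))
      = colMultiset H G' (wlIter H G' i (initCol H G'))) :
    Finset.univ.image (jointCol H G G' i)
      = Finset.univ.image (wlIter H G i (initCol H G)) := by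
  have key : ∀ c : H.C, (∃ v : G'.V, wlIter H G' i (initCol H G') v = c) →
      ∃ v : G.V, wlIter H G i (initCol H G) v = c := by
    rintro c ⟨v, rfl⟩
    have hm : wlIter H G' i (initCol H G') v ∈ colMultiset H G (wlIter H G i (initCol H G)) := by
      rw [h]
      exact Multiset.mem_map_of_mem _ (Finset.mem_val.mpr (Finset.mem_univ v))
    obtain ⟨w, _, hw⟩ := Multiset.mem_map.mp hm
    exact ⟨w, hw⟩
  ext c
  simp only [Finset.mem_image, Finset.mem_univ, true_and]
  constructor
  · rintro ⟨x, rfl⟩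
    cases x with
    | inl v => exact ⟨v, rfl⟩
    | inr v => exact key _ ⟨v, rfl⟩
  · rintro ⟨v, rfl⟩
    exact ⟨Sum.inl v, rfl⟩

end Stab
section MuAll

variable {p : ℕ} (H : HashSetup p) (G G' : LabGraph p)

lemma mu_down {i : ℕ}
    (h : colMultiset H G (wlIter H G (i+1) (initCol H G))
      = colMultiset H G' (wlIter H G' (i+1) (initCol H G'))) :
    colMultiset H G (wlIter H G i (initCol H G))
      = colMultiset H G' (wlIter H G' i (initCol H G')) := by
  refine mapTrans h ?_
  intro a _ b _ hab
  simp only [wlIter, wlStep] at hab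
  exact (hRefine_inj H hab).1

lemma mu_all
    (h : colMultiset H G (wlIter H G (Fintype.card G.V) (initCol H G))
      = colMultiset H G' (wlIter H G' (Fintype.card G'.V) (initCol H G'))) :
    ∀ j, colMultiset H G (wlIter H G j (initCol H G))
      = colMultiset H G' (wlIter H G' j (initCol H G')) := by
  have hcard : Fintype.card G'.V = Fintype.card G.V := by
    have := congrArg Multiset.card h
    simpa [colMultiset] using this.symm
  set N := Fintype.card G.V with hNdef
  rw [hcard] at h
  -- downward closure
  have down : ∀ m j, j + m = N → colMultiset H G (wlIter H G j (initCol H G))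
      = colMultiset H G' (wlIter H G' j (initCol H G')) := by
    intro m
    induction m with
    | zero => intro j hj; rw [Nat.add_zero] at hj; rw [hj]; exact h
    | succ m ih =>
      intro j hj
      exact mu_down H G G' (ih (j+1) (by omega))
  have down' : ∀ j, j ≤ N → colMultiset H G (wlIter H G j (initCol H G))
      = colMultiset H G' (wlIter H G' j (initCol H G')) :=
    fun j hj => down (N - j) j (by omega)
  rcases Nat.eq_zero_or_pos N with hN0 | hNpos
  · -- both graphs empty
    have h1 : (Finset.univ : Finset G.V).val = 0 := by
      rw [← Multiset.card_eq_zero]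
      simpa using hN0.symm ▸ rfl
    have h2 : (Finset.univ : Finset G'.V).val = 0 := by
      rw [← Multiset.card_eq_zero]
      have : Fintype.card G'.V = 0 := by omega
      simpa using this
    intro j
    simp [colMultiset, h1, h2]
  -- pigeonhole: the joint partition stabilizes before round N
  have hle : ∀ i, i ≤ N → (Finset.univ.image (jointCol H G G' i)).card ≤ N := by
    intro i hi
    rw [joint_image_eq H G G' i (down' i hi)]
    calc (Finset.univ.image (wlIter H G i (initCol H G))).card
        ≤ (Finset.univ : Finset G.V).card := Finset.card_image_le
      _ = N := Finset.card_univ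
  have hstab : ∃ i, i < N ∧ JStb H G G' i := by
    by_contra hcon
    push_neg at hcon
    have hstrict : ∀ i, i < N → (Finset.univ.image (jointCol H G G' i)).card
        < (Finset.univ.image (jointCol H G G' (i+1))).card := by
      intro i hi
      refine lt_of_le_of_ne (jcard_mono H G G' i) ?_
      intro heq
      exact hcon i hi (jstb_of_card_eq H G G' heq)
    have hgrow : ∀ i, i ≤ N → i + 1 ≤ (Finset.univ.image (jointCol H G G' i)).card := by
      intro i
      induction i with
      | zero =>
        intro _
        have : Nonempty G.V := by
          rw [← Fintype.card_pos_iff]; omega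
        obtain ⟨v⟩ := this
        have : jointCol H G G' 0 (Sum.inl v) ∈ Finset.univ.image (jointCol H G G' 0) :=
          Finset.mem_image_of_mem _ (Finset.mem_univ _)
        exact Finset.card_pos.mpr ⟨_, this⟩
      | succ i ih =>
        intro hi
        have := ih (by omega)
        have := hstrict i (by omega)
        omega
    have := hgrow N le_rfl
    have := hle N le_rfl
    omega
  obtain ⟨i₀, hi₀N, hi₀⟩ := hstab
  have stbAll : ∀ j, i₀ ≤ j → JStb H G G' j := by
    intro j
    induction j with
    | zero => intro hj; rwa [Nat.le_zero.mp hj] at hi₀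
    | succ j ih =>
      intro hj
      rcases Nat.lt_or_ge i₀ (j+1) with hlt | hge
      · exact jstb_succ H G G' (ih (by omega))
      · rwa [Nat.le_antisymm hj hge] at hi₀
  have up : ∀ j, N ≤ j → colMultiset H G (wlIter H G j (initCol H G))
      = colMultiset H G' (wlIter H G' j (initCol H G')) := by
    intro j hj
    induction j with
    | zero => exact down' 0 (by omega)
    | succ j ih =>
      rcases Nat.lt_or_ge j N with hlt | hge
      · exact down' (j+1) (by omega)
      · have hmu := ih hge
        refine mapTrans hmu ?_
        intro a _ b _ hab
        exact stbAll j (by omega) (Sum.inl a) (Sum.inr b) hab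
  intro j
  rcases le_or_gt j N with hj | hj
  · exact down' j hj
  · exact up j (by omega)

end MuAll
section Build

variable {p : ℕ}

noncomputable def aggE (mEnc : Multiset ℝ → ℝ) : Multiset (Fin 1 → ℝ) → Fin 1 → ℝ :=
  fun M _ => mEnc (M.map (fun f => f 0))

noncomputable def stepLayer (H : HashSetup p) (enc : H.C → ℝ) (dec : ℝ → H.C)
    (mEnc : Multiset ℝ → ℝ) (decM : ℝ → Multiset ℝ) : GNNLayer 1 1 where
  agg := aggE mEnc
  com := fun x _ => enc (H.hRefine (dec (x 0)) ((decM (x 1)).map dec))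

noncomputable def finalLayer (H : HashSetup p) (dec : ℝ → H.C)
    (mEnc : Multiset ℝ → ℝ) (decM : ℝ → Multiset ℝ) (c : H.C) : GNNLayer 1 1 where
  agg := aggE mEnc
  com := fun x _ => if H.hRefine (dec (x 0)) ((decM (x 1)).map dec) = c then 1 else -1

noncomputable def firstLayer (H : HashSetup p) (enc : H.C → ℝ) : GNNLayer p 1 where
  agg := fun _ _ => 0
  com := fun x _ => enc (H.hInit (fun i => x (Fin.castAdd p i) = 1))

noncomputable def middleGNN (H : HashSetup p) (enc : H.C → ℝ) (dec : ℝ → H.C)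
    (mEnc : Multiset ℝ → ℝ) (decM : ℝ → Multiset ℝ) (c : H.C) : ℕ → GNN 1 1
  | 0 => .last (finalLayer H dec mEnc decM c)
  | (k+1) => .cons (stepLayer H enc dec mEnc decM) (middleGNN H enc dec mEnc decM c k)

noncomputable def buildGNN (H : HashSetup p) (enc : H.C → ℝ) (dec : ℝ → H.C)
    (mEnc : Multiset ℝ → ℝ) (decM : ℝ → Multiset ℝ) (c : H.C) (n : ℕ) : GNN p 1 :=
  .cons (firstLayer H enc) (middleGNN H enc dec mEnc decM c n)

lemma append_fin1_zero (u w : Fin 1 → ℝ) : Fin.append u w 0 = u 0 :=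
  Fin.append_left u w 0

lemma append_fin1_one (u w : Fin 1 → ℝ) : Fin.append u w 1 = w 0 :=
  Fin.append_right u w 0

variable {H : HashSetup p} {enc : H.C → ℝ} {dec : ℝ → H.C}
  {mEnc : Multiset ℝ → ℝ} {decM : ℝ → Multiset ℝ} {S : Set H.C}

lemma apply_step (hdec : ∀ s ∈ S, dec (enc s) = s) (hdecM : ∀ M, decM (mEnc M) = M)
    (K : LabGraph p) (col : K.V → H.C) (hcol : ∀ v, col v ∈ S) :
    (stepLayer H enc dec mEnc decM).apply K (fun u _ => enc (col u))
      = fun v _ => enc (wlStep H K col v) := by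
  funext v j
  show enc (H.hRefine (dec (Fin.append _ _ 0)) ((decM (Fin.append _ _ 1)).map dec)) = _
  rw [append_fin1_zero, append_fin1_one]
  have hagg : aggE mEnc ((K.nbrFinset v).val.map (fun u (_ : Fin 1) => enc (col u))) 0
      = mEnc ((K.nbrFinset v).val.map (fun u => enc (col u))) := by
    show mEnc ((((K.nbrFinset v).val.map (fun u (_ : Fin 1) => enc (col u))).map
      (fun f => f 0))) = _
    rw [Multiset.map_map]
    rfl
  show enc (H.hRefine (dec (enc (col v))) ((decM (aggE mEnc _ 0)).map dec)) = _
  rw [hagg, hdecM, hdec _ (hcol v), Multiset.map_map]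
  have h2 : ((K.nbrFinset v).val.map (dec ∘ fun u => enc (col u)))
      = (K.nbrFinset v).val.map col :=
    Multiset.map_congr rfl (fun u _ => hdec _ (hcol u))
  rw [h2]
  rfl

lemma apply_final {c : H.C} (hdec : ∀ s ∈ S, dec (enc s) = s)
    (hdecM : ∀ M, decM (mEnc M) = M)
    (K : LabGraph p) (col : K.V → H.C) (hcol : ∀ v, col v ∈ S) :
    (finalLayer H dec mEnc decM c).apply K (fun u _ => enc (col u))
      = fun v _ => if wlStep H K col v = c then (1:ℝ) else -1 := by
  funext v j
  show (if H.hRefine (dec (Fin.append _ _ 0)) ((decM (Fin.append _ _ 1)).map dec) = c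
    then (1:ℝ) else -1) = _
  rw [append_fin1_zero, append_fin1_one]
  have hagg : aggE mEnc ((K.nbrFinset v).val.map (fun u (_ : Fin 1) => enc (col u))) 0
      = mEnc ((K.nbrFinset v).val.map (fun u => enc (col u))) := by
    show mEnc ((((K.nbrFinset v).val.map (fun u (_ : Fin 1) => enc (col u))).map
      (fun f => f 0))) = _
    rw [Multiset.map_map]
    rfl
  show (if H.hRefine (dec (enc (col v))) ((decM (aggE mEnc _ 0)).map dec) = c
    then (1:ℝ) else -1) = _
  rw [hagg, hdecM, hdec _ (hcol v), Multiset.map_map]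
  have h2 : ((K.nbrFinset v).val.map (dec ∘ fun u => enc (col u)))
      = (K.nbrFinset v).val.map col :=
    Multiset.map_congr rfl (fun u _ => hdec _ (hcol u))
  rw [h2]
  rfl

lemma middle_run {c : H.C} (hdec : ∀ s ∈ S, dec (enc s) = s)
    (hdecM : ∀ M, decM (mEnc M) = M) (k : ℕ) (K : LabGraph p) (col : K.V → H.C)
    (hcol : ∀ j ≤ k, ∀ v, wlIter H K j col v ∈ S) :
    GNN.run (middleGNN H enc dec mEnc decM c k) K (fun u _ => enc (col u))
      = fun v _ => if wlIter H K (k+1) col v = c then (1:ℝ) else -1 := by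
  induction k generalizing col with
  | zero =>
    show (finalLayer H dec mEnc decM c).apply K _ = _
    rw [apply_final hdec hdecM K col (hcol 0 le_rfl)]
    rfl
  | succ k ih =>
    show GNN.run (middleGNN H enc dec mEnc decM c k) K
      ((stepLayer H enc dec mEnc decM).apply K _) = _
    rw [apply_step hdec hdecM K col (hcol 0 (by omega))]
    rw [ih (wlStep H K col) ?_]
    · funext v j
      rw [← wlIter_succ']
    · intro j hj v
      rw [← wlIter_succ']
      exact hcol (j+1) (by omega) v

lemma first_apply (K : LabGraph p) :
    (firstLayer H enc (p := p)).apply K K.embG = fun v _ => enc (initCol H K v) := by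
  funext v j
  show enc (H.hInit (fun i => Fin.append (K.embG v) _ (Fin.castAdd p i) = 1)) = _
  have h1 : (fun i => Fin.append (K.embG v) ((firstLayer H enc (p := p)).agg
      ((K.nbrFinset v).val.map K.embG)) (Fin.castAdd p i) = 1) = K.lab v := by
    funext i
    rw [Fin.append_left]
    show (K.embG v i = 1) = _
    simp only [LabGraph.embG]
    by_cases h : K.lab v i
    · simp [h]
    · simp [h]
  rw [h1]
  rfl

lemma build_run {c : H.C} (hdec : ∀ s ∈ S, dec (enc s) = s)
    (hdecM : ∀ M, decM (mEnc M) = M) (n : ℕ) (K : LabGraph p)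
    (hcol : ∀ j ≤ n, ∀ v, wlIter H K j (initCol H K) v ∈ S) (v : K.V) :
    GNN.run (buildGNN H enc dec mEnc decM c n) K K.embG v
      = fun _ => if wlIter H K (n+1) (initCol H K) v = c then (1:ℝ) else -1 := by
  show GNN.run (middleGNN H enc dec mEnc decM c n) K ((firstLayer H enc).apply K K.embG) v = _
  rw [first_apply, middle_run hdec hdecM n K (initCol H K) hcol]

lemma build_cls {c : H.C} (hdec : ∀ s ∈ S, dec (enc s) = s)
    (hdecM : ∀ M, decM (mEnc M) = M) (n : ℕ) (K : LabGraph p)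
    (hcol : ∀ j ≤ n, ∀ v, wlIter H K j (initCol H K) v ∈ S) (v : K.V) :
    GNN.cls (buildGNN H enc dec mEnc decM c n) K v
      = if wlIter H K (n+1) (initCol H K) v = c then true else false := by
  have hr := build_run (c := c) hdec hdecM n K hcol v
  unfold GNN.cls GNN.clsP
  rw [hr]
  by_cases h : wlIter H K (n+1) (initCol H K) v = c
  · simp [h]
  · simp [h]

end Build
section Assemble

variable {p : ℕ}

lemma exists_mEnc : ∃ f : Multiset ℝ → ℝ, Function.Injective f := by
  have h1 : Cardinal.mk (Multiset ℝ) ≤ Cardinal.mk (List ℝ) := Cardinal.mk_quotient_le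
  rw [Cardinal.mk_list_eq_mk] at h1
  obtain ⟨f⟩ := (Cardinal.le_def _ _).mp h1
  exact ⟨f, f.injective⟩

lemma exists_encdec (H : HashSetup p) (Sfin : Finset H.C) :
    ∃ (enc : H.C → ℝ) (dec : ℝ → H.C), ∀ s ∈ Sfin, dec (enc s) = s := by
  classical
  let L := Sfin.toList
  refine ⟨fun s => (L.idxOf s : ℝ), fun x => L.getD ⌊x⌋₊ (H.hInit fun _ => True), ?_⟩
  intro s hs
  have hmem : s ∈ L := Finset.mem_toList.mpr hs
  have hlt : L.idxOf s < L.length := List.idxOf_lt_length_iff.mpr hmem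
  simp only [Nat.floor_natCast]
  rw [List.getD_eq_getElem _ _ hlt]
  exact List.getElem_idxOf hlt

lemma count_indicator {α : Type} {C : Type} (f : α → C) (c : C) (s : Multiset α) :
    Multiset.count true (s.map (fun v => if f v = c then true else false))
      = Multiset.count c (s.map f) := by
  classical
  rw [Multiset.count_map, Multiset.count_map]
  congr 1
  refine Multiset.filter_congr ?_
  intro a _
  by_cases h : f a = c
  · simp [h]
  · simp [h, Ne.symm h]

end Assemble
/-- `G ≢_{WL-IR-0} G'` iff `G ≢_{GNN} G'` (graph-level separation
by GNN node classifiers). -/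
theorem wlir0_eq_gnn (p : ℕ) (H : HashSetup p) (G G' : LabGraph p) :
    ¬ WLIRequiv H G G' 0 ↔ ¬ gnnGraphEquiv p G G' := by
  rw [not_iff_not]
  have hwlir : WLIRequiv H G G' 0 ↔
      colMultiset H G (wlIter H G (Fintype.card G.V) (initCol H G))
        = colMultiset H G' (wlIter H G' (Fintype.card G'.V) (initCol H G')) := by
    unfold WLIRequiv
    rw [show WLIR H G 0 (initCol H G)
      = CTree.node (colMultiset H G (wlIter H G (Fintype.card G.V) (initCol H G))) [] from rfl]
    rw [show WLIR H G' 0 (initCol H G')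
      = CTree.node (colMultiset H G' (wlIter H G' (Fintype.card G'.V) (initCol H G'))) []
      from rfl]
    exact leaf_iso _ _
  rw [hwlir]
  constructor
  · -- WL-indistinguishable ⟹ GNN-indistinguishable
    intro hμ A
    have hall := mu_all H G G' hμ
    refine mapTrans (hall A.depth) ?_
    intro a _ b _ hab
    have hrun := gnn_sim H A G G' (initCol H G) (initCol H G') G.embG G'.embG
      (fun v w h => embG_of_hInit_eq H h) a b hab
    simp [GNN.cls, GNN.clsP, hrun]
    by_cases hpos : 0 < A.run G' G'.embG b 0 <;> simp [hpos]
  · -- GNN-indistinguishable ⟹ WL-indistinguishable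
    intro hgnn
    have hcard : Fintype.card G.V = Fintype.card G'.V := by
      have h0 := hgnn (GNN.last ⟨fun _ _ => 0, fun _ _ => 0⟩)
      have := congrArg Multiset.card h0
      rwa [Multiset.card_map, Multiset.card_map] at this
    by_contra hne
    have hex : ∃ c, Multiset.count c
        (colMultiset H G (wlIter H G (Fintype.card G.V) (initCol H G)))
        ≠ Multiset.count c
        (colMultiset H G' (wlIter H G' (Fintype.card G'.V) (initCol H G'))) := by
      by_contra hall
      push_neg at hall
      exact hne (Multiset.ext.mpr hall)
    obtain ⟨c, hc⟩ := hex
    set N := Fintype.card G.V with hNdef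
    have hN1 : 1 ≤ N := by
      rcases Nat.eq_zero_or_pos N with h0 | h
      · exfalso
        apply hc
        have h1 : (Finset.univ : Finset G.V).val = 0 := by
          rw [← Multiset.card_eq_zero]; exact h0 ▸ rfl
        have h2 : (Finset.univ : Finset G'.V).val = 0 := by
          rw [← Multiset.card_eq_zero]
          show Fintype.card G'.V = 0
          omega
        simp [colMultiset, h1, h2]
      · exact h
    classical
    -- the finite set of relevant colors
    set Sfin : Finset H.C := (Finset.range (N+1)).biUnion
      (fun j => Finset.univ.image (wlIter H G j (initCol H G))
        ∪ Finset.univ.image (wlIter H G' j (initCol H G'))) with hSdef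
    obtain ⟨mEnc, hmEnc⟩ := exists_mEnc
    obtain ⟨enc, dec, hdec⟩ := exists_encdec H Sfin
    have hdec' : ∀ s ∈ (↑Sfin : Set H.C), dec (enc s) = s := fun s hs => hdec s hs
    have hdecM : ∀ M, Function.invFun mEnc (mEnc M) = M :=
      fun M => Function.leftInverse_invFun hmEnc M
    have hcolG : ∀ j ≤ N - 1, ∀ v : G.V,
        wlIter H G j (initCol H G) v ∈ (↑Sfin : Set H.C) := by
      intro j hj v
      apply Finset.mem_coe.mpr
      refine Finset.mem_biUnion.mpr ⟨j, Finset.mem_range.mpr (by omega), ?_⟩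
      exact Finset.mem_union_left _ (Finset.mem_image_of_mem _ (Finset.mem_univ v))
    have hcolG' : ∀ j ≤ N - 1, ∀ v : G'.V,
        wlIter H G' j (initCol H G') v ∈ (↑Sfin : Set H.C) := by
      intro j hj v
      apply Finset.mem_coe.mpr
      refine Finset.mem_biUnion.mpr ⟨j, Finset.mem_range.mpr (by omega), ?_⟩
      exact Finset.mem_union_right _ (Finset.mem_image_of_mem _ (Finset.mem_univ v))
    have hA := hgnn (buildGNN H enc dec mEnc (Function.invFun mEnc) c (N-1))
    have hclsG : ∀ v : G.V, GNN.cls (buildGNN H enc dec mEnc (Function.invFun mEnc) c (N-1)) G v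
        = if wlIter H G N (initCol H G) v = c then true else false := by
      intro v
      rw [build_cls (c := c) hdec' hdecM (N-1) G hcolG v]
      rw [show N - 1 + 1 = N by omega]
    have hclsG' : ∀ v : G'.V,
        GNN.cls (buildGNN H enc dec mEnc (Function.invFun mEnc) c (N-1)) G' v
        = if wlIter H G' N (initCol H G') v = c then true else false := by
      intro v
      rw [build_cls (c := c) hdec' hdecM (N-1) G' hcolG' v]
      rw [show N - 1 + 1 = N by omega]
    rw [Multiset.map_congr rfl (fun v _ => hclsG v),
      Multiset.map_congr rfl (fun v _ => hclsG' v)] at hA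
    apply hc
    rw [← hcard]
    calc Multiset.count c (colMultiset H G (wlIter H G N (initCol H G)))
        = Multiset.count true (Finset.univ.val.map
            (fun v => if wlIter H G N (initCol H G) v = c then true else false)) :=
          (count_indicator _ c _).symm
      _ = Multiset.count true (Finset.univ.val.map
            (fun v => if wlIter H G' N (initCol H G') v = c then true else false)) := by
          rw [hA]
      _ = Multiset.count c (colMultiset H G' (wlIter H G' N (initCol H G'))) :=
          count_indicator _ c _
end
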